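/- arXiv:2201.05490 — 8 statements merged into one kernel-verified Lean document; each statement's English description precedes it below -/
import Mathlib

section
/- Let r_g > 0 and L_g, C, ω be real numbers. Let J = [[0,-1],[1,0]] be the 2×2 skew-symmetric rotation generator, Z_g := L_g·ω·J − r_g·I₂ and Y_c := C·ω·J. Then the 4×4 real block matrix Q := [[Z_g, −I₂],[I₂, −Y_c]] is invertible. -/
open Matrix

/-- The 2×2 rotation generator `J = [[0,-1],[1,0]]`. -/
def Jmat : Matrix (Fin 2) (Fin 2) ℝ := !![0, -1; 1, 0]

/-- with `r_g > 0`, the block matrix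
`Q = [[Z_g, -I₂],[I₂, -Y_c]]`, where `Z_g = L_g·ω·J - r_g·I₂` and `Y_c = C·ω·J`,
is invertible. -/
theorem block_matrix_Q_invertible (rg Lg C ω : ℝ) (hrg : 0 < rg) :
    IsUnit (Matrix.fromBlocks
      ((Lg * ω) • Jmat - rg • (1 : Matrix (Fin 2) (Fin 2) ℝ))
      (-(1 : Matrix (Fin 2) (Fin 2) ℝ))
      (1 : Matrix (Fin 2) (Fin 2) ℝ)
      (-((C * ω) • Jmat))) := by
  rw [Matrix.isUnit_iff_isUnit_det, isUnit_iff_ne_zero]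
  have h : (Matrix.fromBlocks
      ((Lg * ω) • Jmat - rg • (1 : Matrix (Fin 2) (Fin 2) ℝ))
      (-(1 : Matrix (Fin 2) (Fin 2) ℝ))
      (1 : Matrix (Fin 2) (Fin 2) ℝ)
      (-((C * ω) • Jmat))).det
      = (1 + Lg * ω * (C * ω))^2 + (rg * (C * ω))^2 := by
    rw [← Matrix.det_submatrix_equiv_self finSumFinEquiv.symm]
    rw [show ∀ M : Matrix (Fin 2 ⊕ Fin 2) (Fin 2 ⊕ Fin 2) ℝ,
        M.submatrix finSumFinEquiv.symm finSumFinEquiv.symm =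
        !![M (Sum.inl 0) (Sum.inl 0), M (Sum.inl 0) (Sum.inl 1), M (Sum.inl 0) (Sum.inr 0), M (Sum.inl 0) (Sum.inr 1);
           M (Sum.inl 1) (Sum.inl 0), M (Sum.inl 1) (Sum.inl 1), M (Sum.inl 1) (Sum.inr 0), M (Sum.inl 1) (Sum.inr 1);
           M (Sum.inr 0) (Sum.inl 0), M (Sum.inr 0) (Sum.inl 1), M (Sum.inr 0) (Sum.inr 0), M (Sum.inr 0) (Sum.inr 1);
           M (Sum.inr 1) (Sum.inl 0), M (Sum.inr 1) (Sum.inl 1), M (Sum.inr 1) (Sum.inr 0), M (Sum.inr 1) (Sum.inr 1)]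
        from fun M => by
          ext i j
          fin_cases i <;> fin_cases j <;> rfl]
    simp [Matrix.det_succ_row_zero, Fin.sum_univ_succ, Matrix.fromBlocks, Jmat,
      Matrix.one_apply, Fin.succAbove]
    ring
  rw [h]
  have hc : (0:ℝ) < (1 + Lg * ω * (C * ω))^2 + (rg * (C * ω))^2 := by
    rcases eq_or_ne (C * ω) 0 with h0 | h0
    · simp [h0]
    · positivity
  linarith
end

section
/- Let r_g, L_g, C, L, r be positive reals and ω ∈ ℝ. For vectors ȳ₁₂, ȳ₃₄, ȳ₅₆, x̄ ∈ ℝ² with x̄ ≠ 0 and scalars ū₁ ∈ ℝ, ū₂₃ ∈ ℝ², the following four equations hold simultaneously: (i) −(r_g/L_g)ȳ₁₂ + (1/L_g)ȳ₃₄ + ū₁·J·ȳ₁₂ − x̄ = 0, (ii) −(1/C)ȳ₁₂ + (1/C)ȳ₅₆ + ū₁·J·ȳ₃₄ = 0, (iii) −(1/L)ȳ₃₄ − (r/L)ȳ₅₆ + ū₁·J·ȳ₅₆ + (1/L)ū₂₃ = 0, (iv) (ū₁ − ω)·J·x̄ = 0, if and only if ū₁ = ω, ū₂₃ = ȳ₃₄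 − (L·ω·J − r·I₂)·ȳ₅₆, and (ȳ₁₂, ȳ₃₄) is the unique solution of the linear system (L_g·ω·J − r_g·I₂)·ȳ₁₂ + ȳ₃₄ = L_g·x̄ and ȳ₁₂ − C·ω·J·ȳ₃₄ = ȳ₅₆. Moreover, for every pair (x̄, ȳ₅₆) ∈ ℝ²×ℝ² this linear system has exactly one solution (ȳ₁₂, ȳ₃₄). -/
open Matrix

/-- characterization of the assignable equilibria of the dq model of
the grid-connected VSC, and the corresponding equilibrium input. -/
theorem assignable_equilibria
    (rg Lg C L r ω : ℝ) (hrg : 0 < rg) (hLg : 0 < Lg) (hC : 0 < C)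
    (hL : 0 < L) (hr : 0 < r)
    (y12 y34 y56 xbar : Fin 2 → ℝ) (hx : xbar ≠ 0) (u1 : ℝ) (u23 : Fin 2 → ℝ) :
    ((( -(rg / Lg)) • y12 + (1 / Lg) • y34 + u1 • Jmat.mulVec y12 - xbar = 0 ∧
      (-(1 / C)) • y12 + (1 / C) • y56 + u1 • Jmat.mulVec y34 = 0 ∧
      (-(1 / L)) • y34 + (-(r / L)) • y56 + u1 • Jmat.mulVec y56 + (1 / L) • u23 = 0 ∧
      (u1 - ω) • Jmat.mulVec xbar = 0) ↔
     (u1 = ω ∧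
      u23 = y34 - ((L * ω) • Jmat - r • (1 : Matrix (Fin 2) (Fin 2) ℝ)).mulVec y56 ∧
      ((Lg * ω) • Jmat - rg • (1 : Matrix (Fin 2) (Fin 2) ℝ)).mulVec y12 + y34 = Lg • xbar ∧
      y12 - ((C * ω) • Jmat).mulVec y34 = y56)) ∧
    (∀ xb yc : Fin 2 → ℝ, ∃! p : (Fin 2 → ℝ) × (Fin 2 → ℝ),
      ((Lg * ω) • Jmat - rg • (1 : Matrix (Fin 2) (Fin 2) ℝ)).mulVec p.1 + p.2 = Lg • xb ∧
      p.1 - ((C * ω) • Jmat).mulVec p.2 = yc) := by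
  have hLg' : Lg ≠ 0 := hLg.ne'
  have hC' : C ≠ 0 := hC.ne'
  have hL' : L ≠ 0 := hL.ne'
  have hd : (0:ℝ) < (1 - Lg * C * ω ^ 2) ^ 2 + (rg * C * ω) ^ 2 := by
    rcases eq_or_ne ω 0 with h | h
    · subst h; norm_num
    · have h1 : (0:ℝ) < (rg * C * ω) ^ 2 :=
        sq_pos_of_ne_zero (mul_ne_zero (mul_ne_zero hrg.ne' hC') h)
      nlinarith [sq_nonneg (1 - Lg * C * ω ^ 2)]
  have hd' : ((1 - Lg * C * ω ^ 2) ^ 2 + (rg * C * ω) ^ 2) ≠ 0 := hd.ne'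
  have hx' : xbar 0 ≠ 0 ∨ xbar 1 ≠ 0 := by
    by_contra h
    push_neg at h
    exact hx (funext fun i => by fin_cases i <;> simp [h.1, h.2])
  constructor
  · simp only [Jmat, Matrix.mulVec, dotProduct, Fin.sum_univ_two, funext_iff,
      Fin.forall_fin_two, Matrix.sub_apply, Matrix.smul_apply, Matrix.one_apply,
      Pi.add_apply, Pi.smul_apply, Pi.sub_apply, Pi.zero_apply, smul_eq_mul,
      Matrix.cons_val', Matrix.cons_val_zero, Matrix.cons_val_one, Matrix.head_cons,
      Matrix.vecHead, Matrix.vecTail, Function.comp]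
    norm_num [sub_eq_zero, mul_eq_zero]
    constructor
    · rintro ⟨⟨e1, e2⟩, ⟨e3, e4⟩, ⟨e5, e6⟩, h7, h8⟩
      have hu : u1 = ω := by
        rcases hx' with h | h
        · rcases h8 with h' | h'
          · exact h'
          · exact absurd h' h
        · rcases h7 with h' | h'
          · exact h'
          · exact absurd h' h
      subst hu
      field_simp at e1 e2 e3 e4 e5 e6
      have E1 : -(rg * y12 0) + y34 0 + -(u1 * y12 1 * Lg) = xbar 0 * Lg :=
        mul_left_cancel₀ hLg' (by linear_combination Lg * e1)
      have E2 : -(rg * y12 1) + y34 1 + u1 * y12 0 * Lg = xbar 1 * Lg :=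
        mul_left_cancel₀ hLg' (by linear_combination Lg * e2)
      have E3 : -(y12 0) + y56 0 + -(u1 * y34 1 * C) = 0 :=
        mul_left_cancel₀ hC' (by linear_combination C * e3)
      have E4 : -(y12 1) + y56 1 + u1 * y34 0 * C = 0 :=
        mul_left_cancel₀ hC' (by linear_combination C * e4)
      have E5 : -(y34 0) + -(r * y56 0) + -(u1 * y56 1 * L) + u23 0 = 0 :=
        mul_left_cancel₀ (pow_ne_zero 2 hL') (by linear_combination L^2 * e5)
      have E6 : -(y34 1) + -(r * y56 1) + u1 * y56 0 * L + u23 1 = 0 :=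
        mul_left_cancel₀ (pow_ne_zero 2 hL') (by linear_combination L^2 * e6)
      refine ⟨rfl, ⟨by linarith, by linarith⟩, ⟨by linarith, by linarith⟩,
        by linarith, by linarith⟩
    · rintro ⟨hu, ⟨e5, e6⟩, ⟨e1, e2⟩, e3, e4⟩
      subst hu
      refine ⟨⟨?_, ?_⟩, ⟨?_, ?_⟩, ⟨?_, ?_⟩, Or.inl rfl, Or.inl rfl⟩ <;> field_simp
      · linear_combination e1
      · linear_combination e2
      · linear_combination (-1) * e3
      · linear_combination (-1) * e4
      · linear_combination e5
      · linear_combination e6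
  · intro xb yc
    set a : ℝ := 1 - Lg * C * ω ^ 2 with ha
    set b : ℝ := rg * C * ω with hb
    set c0 : ℝ := Lg * xb 0 + rg * yc 0 + Lg * ω * yc 1 with hc0
    set c1 : ℝ := Lg * xb 1 - Lg * ω * yc 0 + rg * yc 1 with hc1
    set p : ℝ := (a * c0 - b * c1) / (a ^ 2 + b ^ 2) with hp
    set q : ℝ := (b * c0 + a * c1) / (a ^ 2 + b ^ 2) with hq
    refine ⟨⟨![yc 0 - C * ω * q, yc 1 + C * ω * p], ![p, q]⟩, ?_, ?_⟩
    · simp only [Jmat, Matrix.mulVec, dotProduct, Fin.sum_univ_two, funext_iff,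
        Fin.forall_fin_two, Matrix.sub_apply, Matrix.smul_apply, Matrix.one_apply,
        Pi.add_apply, Pi.smul_apply, Pi.sub_apply, smul_eq_mul,
        Matrix.cons_val', Matrix.cons_val_zero, Matrix.cons_val_one, Matrix.head_cons,
        Matrix.vecHead, Matrix.vecTail, Function.comp]
      norm_num
      refine ⟨?_, ?_⟩ <;>
        · simp only [hp, hq]
          field_simp
          simp only [hc0, hc1, ha, hb]
          ring
    · rintro ⟨z, w⟩ ⟨h1, h2⟩
      simp only [Jmat, Matrix.mulVec, dotProduct, Fin.sum_univ_two, funext_iff,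
        Fin.forall_fin_two, Matrix.sub_apply, Matrix.smul_apply, Matrix.one_apply,
        Pi.add_apply, Pi.smul_apply, Pi.sub_apply, smul_eq_mul,
        Matrix.cons_val', Matrix.cons_val_zero, Matrix.cons_val_one, Matrix.head_cons,
        Matrix.vecHead, Matrix.vecTail, Function.comp] at h1 h2
      norm_num at h1 h2
      obtain ⟨e1, e2⟩ := h1
      obtain ⟨e3, e4⟩ := h2
      have hw0 : w 0 = p := by
        rw [hp, eq_div_iff (by simpa [ha, hb] using hd')]
        simp only [hc0, hc1, ha, hb]
        linear_combination (1 - Lg*C*ω^2) * e1 - (rg*C*ω) * e2 +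
          ((1 - Lg*C*ω^2)*rg + rg*C*ω*Lg*ω) * e3 +
          ((1 - Lg*C*ω^2)*Lg*ω - rg*C*ω*rg) * e4
      have hw1 : w 1 = q := by
        rw [hq, eq_div_iff (by simpa [ha, hb] using hd')]
        simp only [hc0, hc1, ha, hb]
        linear_combination (rg*C*ω) * e1 + (1 - Lg*C*ω^2) * e2 +
          ((rg*C*ω)*rg - (1 - Lg*C*ω^2)*Lg*ω) * e3 +
          ((rg*C*ω)*Lg*ω + (1 - Lg*C*ω^2)*rg) * e4
      have hz0 : z 0 = yc 0 - C * ω * q := by rw [← hw1]; linarith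
      have hz1 : z 1 = yc 1 + C * ω * p := by rw [← hw0]; linarith
      refine Prod.ext ?_ ?_ <;> funext i <;> fin_cases i <;>
        simp [hz0, hz1, hw0, hw1]
end

section
/- Let ω ∈ ℝ, let u₁ : ℝ → ℝ and q : ℝ → ℝ² be continuous, and let y, z₁, z₂, x : ℝ → ℝ² be differentiable functions satisfying for all t: y'(t) = q(t) − x(t), x'(t) = (u₁(t) − ω)·J·x(t), z₁'(t) = u₁(t)·J·z₁(t) + J·q(t), and z₂'(t) = u₁(t)·J·(z₂(t) − J·y(t)). Then the function e : ℝ → ℝ² defined by e(t) := ω·(z₁(t) + z₂(t) − J·y(t)) + x(t) satisfies e'(t) = u₁(t)·J·e(t) for all t. -/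
open Matrix

/-- the GPEBO error signal `e = ω·(z₁ + z₂ - J·y) + x` satisfies the
homogeneous LTV dynamics `e' = u₁·J·e`. -/
theorem gpebo_error_dynamics
    (ω : ℝ) (u1 : ℝ → ℝ) (q : ℝ → Fin 2 → ℝ)
    (hu1 : Continuous u1) (hq : Continuous q)
    (y z1 z2 x : ℝ → Fin 2 → ℝ)
    (hy : ∀ t, HasDerivAt y (q t - x t) t)
    (hx : ∀ t, HasDerivAt x ((u1 t - ω) • Jmat.mulVec (x t)) t)
    (hz1 : ∀ t, HasDerivAt z1 (u1 t • Jmat.mulVec (z1 t) + Jmat.mulVec (q t)) t)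
    (hz2 : ∀ t, HasDerivAt z2 (u1 t • Jmat.mulVec (z2 t - Jmat.mulVec (y t))) t) :
    ∀ t, HasDerivAt (fun τ => ω • (z1 τ + z2 τ - Jmat.mulVec (y τ)) + x τ)
      (u1 t • Jmat.mulVec (ω • (z1 t + z2 t - Jmat.mulVec (y t)) + x t)) t := by
  intro t
  have hJy : HasDerivAt (fun τ => Jmat.mulVec (y τ)) (Jmat.mulVec (q t - x t)) t := by
    have h := (Matrix.mulVecLin Jmat).toContinuousLinearMap.hasFDerivAt.comp_hasDerivAt t (hy t)
    simpa [Function.comp_def] using h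
  have H := ((((hz1 t).add (hz2 t)).sub hJy).const_smul ω).add (hx t)
  refine H.congr_deriv ?_
  funext i
  fin_cases i <;>
    simp [Jmat, Matrix.mulVec, dotProduct, Fin.sum_univ_two, Pi.smul_apply,
      Pi.add_apply, Pi.sub_apply, smul_eq_mul, Matrix.vecHead, Matrix.vecTail, Function.comp] <;> ring
end

section
/- Assume the hypotheses: ω ∈ ℝ; u₁ : ℝ → ℝ and q : ℝ → ℝ² continuous; y, z₁, z₂, x : ℝ → ℝ² differentiable with y' = q − x, x' = (u₁ − ω)·J·x, z₁' = u₁·J·z₁ + J·q, z₂' = u₁·J·(z₂ − J·y); Φ : ℝ → M₂(ℝ) differentiable with Φ' = u₁·J·Φ, Φ(0) = I₂; set s := z₁ + z₂ − J·y and θ₂₃ := ω·s(0) + x(0). Let λ > 0 and let y_f, q_f, s_f : ℝ → ℝ² and Φ_f : ℝ → M₂(ℝ) be differentiable functions (with arbitrary initial values) satisfying y_f' = λ(y − y_f), q_f' = λ(q − q_f), s_f' = λ(s − s_f), Φ_f' = λ(Φ − Φ_f). Define Y := λ(y − y_f) − q_f : ℝ → ℝ² and Ω : ℝ → ℝ^{2×3}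 the matrix with columns s_f followed by the two columns of −Φ_f, and θ := (ω, θ₂₃) ∈ ℝ³. Then for all t ≥ 0: Y(t) − Ω(t)·θ = e^{−λt}·(Y(0) − Ω(0)·θ). In particular ‖Y(t) − Ω(t)·θ‖ ≤ e^{−λt}·‖Y(0) − Ω(0)·θ‖, i.e. Y = Ω·θ + ε_t with ε_t decaying exponentially at rate λ. -/
open Matrix

lemma Jmul (v : Fin 2 → ℝ) : Jmat.mulVec v = ![-(v 1), v 0] := by
  funext i
  fin_cases i <;> simp [Jmat, Matrix.mulVec, dotProduct, Fin.sum_univ_two]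

lemma Jmul0 (v : Fin 2 → ℝ) : (Jmat.mulVec v) 0 = -(v 1) := by simp [Jmul, Jmat, Matrix.vecHead, Matrix.vecTail]
lemma Jmul1 (v : Fin 2 → ℝ) : (Jmat.mulVec v) 1 = v 0 := by simp [Jmul, Jmat, Matrix.vecHead, Matrix.vecTail]
lemma JmulM0 (M : Matrix (Fin 2) (Fin 2) ℝ) (j : Fin 2) : (Jmat * M) 0 j = -(M 1 j) := by
  simp [Jmat, Matrix.mul_apply, Fin.sum_univ_two]
lemma JmulM1 (M : Matrix (Fin 2) (Fin 2) ℝ) (j : Fin 2) : (Jmat * M) 1 j = M 0 j := by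
  simp [Jmat, Matrix.mul_apply, Fin.sum_univ_two]

lemma rot_ode_zero (u a b : ℝ → ℝ)
    (ha : ∀ t, HasDerivAt a (u t * (-(b t))) t)
    (hb : ∀ t, HasDerivAt b (u t * a t) t)
    (ha0 : a 0 = 0) (hb0 : b 0 = 0) : ∀ t, a t = 0 ∧ b t = 0 := by
  have hg : ∀ t, HasDerivAt (fun τ => a τ ^ 2 + b τ ^ 2) 0 t := by
    intro t
    have h := (((ha t).mul (ha t)).add ((hb t).mul (hb t)))
    have h2 : (fun τ => a τ ^ 2 + b τ ^ 2) = a * a + b * b := by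
      funext τ; simp only [Pi.add_apply, Pi.mul_apply]; ring
    rw [h2]; exact h.congr_deriv (by ring)
  have hconst := is_const_of_deriv_eq_zero
    (f := fun τ => a τ ^ 2 + b τ ^ 2)
    (fun x => (hg x).differentiableAt) (fun x => (hg x).deriv)
  intro t
  have h := hconst t 0
  simp only [ha0, hb0] at h
  constructor <;> nlinarith [sq_nonneg (a t), sq_nonneg (b t)]

lemma decay_ode (lam : ℝ) (f : ℝ → ℝ)
    (hf : ∀ t, HasDerivAt f (-(lam * f t)) t) :
    ∀ t, f t = Real.exp (-(lam * t)) * f 0 := by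
  have hg : ∀ t, HasDerivAt (fun τ => Real.exp (lam * τ) * f τ) 0 t := by
    intro t
    have he : HasDerivAt (fun τ => Real.exp (lam * τ)) (Real.exp (lam * t) * lam) t :=
      by simpa using ((hasDerivAt_id t).const_mul lam).exp
    have h := he.mul (hf t)
    refine h.congr_deriv ?_
    ring
  have hconst := is_const_of_deriv_eq_zero
    (f := fun τ => Real.exp (lam * τ) * f τ)
    (fun x => (hg x).differentiableAt) (fun x => (hg x).deriv)
  intro t
  have h := hconst t 0
  simp only [mul_zero, Real.exp_zero, one_mul] at h
  have hne : Real.exp (lam * t) ≠ 0 := Real.exp_ne_zero _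
  rw [Real.exp_neg]
  field_simp
  linarith [h]

/-- second claim of Proposition 1: filtering the measurable relation
through the first-order low-pass filter `F(p) = λ/(p+λ)` yields the linear regression
equation `Y = Ω·θ + ε_t`, where the residual `Y - Ω·θ` decays exponentially at rate `λ`. -/
theorem gpebo_linear_regression_equation
    (ω : ℝ) (u1 : ℝ → ℝ) (q : ℝ → Fin 2 → ℝ)
    (hu1 : Continuous u1) (hq : Continuous q)
    (y z1 z2 x : ℝ → Fin 2 → ℝ)
    (hy : ∀ t, HasDerivAt y (q t - x t) t)
    (hx : ∀ t, HasDerivAt x ((u1 t - ω) • Jmat.mulVec (x t)) t)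
    (hz1 : ∀ t, HasDerivAt z1 (u1 t • Jmat.mulVec (z1 t) + Jmat.mulVec (q t)) t)
    (hz2 : ∀ t, HasDerivAt z2 (u1 t • Jmat.mulVec (z2 t - Jmat.mulVec (y t))) t)
    (Φ : ℝ → Matrix (Fin 2) (Fin 2) ℝ)
    (hΦ : ∀ t i j, HasDerivAt (fun τ => Φ τ i j) (u1 t * (Jmat * Φ t) i j) t)
    (hΦ0 : Φ 0 = 1)
    (s : ℝ → Fin 2 → ℝ) (hs : ∀ t, s t = z1 t + z2 t - Jmat.mulVec (y t))
    (θ23 : Fin 2 → ℝ) (hθ23 : θ23 = ω • s 0 + x 0)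
    (lam : ℝ) (hlam : 0 < lam)
    (yf qf sf : ℝ → Fin 2 → ℝ) (Φf : ℝ → Matrix (Fin 2) (Fin 2) ℝ)
    (hyf : ∀ t, HasDerivAt yf (lam • (y t - yf t)) t)
    (hqf : ∀ t, HasDerivAt qf (lam • (q t - qf t)) t)
    (hsf : ∀ t, HasDerivAt sf (lam • (s t - sf t)) t)
    (hΦf : ∀ t i j, HasDerivAt (fun τ => Φf τ i j) (lam * (Φ t i j - Φf t i j)) t)
    (Y : ℝ → Fin 2 → ℝ) (hY : ∀ t, Y t = lam • (y t - yf t) - qf t)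
    (Ω : ℝ → Matrix (Fin 2) (Fin 3) ℝ)
    (hΩ : ∀ t, Ω t = Matrix.of fun i j => ![sf t i, -(Φf t i 0), -(Φf t i 1)] j)
    (θ : Fin 3 → ℝ) (hθ : θ = ![ω, θ23 0, θ23 1]) :
    ∀ t ≥ (0 : ℝ),
      Y t - (Ω t).mulVec θ = Real.exp (-(lam * t)) • (Y 0 - (Ω 0).mulVec θ) ∧
      Real.sqrt (((Y t - (Ω t).mulVec θ) 0) ^ 2 + ((Y t - (Ω t).mulVec θ) 1) ^ 2) ≤
        Real.exp (-(lam * t)) *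
          Real.sqrt (((Y 0 - (Ω 0).mulVec θ) 0) ^ 2 + ((Y 0 - (Ω 0).mulVec θ) 1) ^ 2) := by
  -- componentwise derivatives
  have hyc : ∀ t (i : Fin 2), HasDerivAt (fun τ => y τ i) (q t i - x t i) t := by
    intro t i; simpa using hasDerivAt_pi.1 (hy t) i
  have hxc : ∀ t (i : Fin 2),
      HasDerivAt (fun τ => x τ i) ((u1 t - ω) * (Jmat.mulVec (x t)) i) t := by
    intro t i; simpa using hasDerivAt_pi.1 (hx t) i
  have hz1c : ∀ t (i : Fin 2), HasDerivAt (fun τ => z1 τ i)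
      (u1 t * (Jmat.mulVec (z1 t)) i + (Jmat.mulVec (q t)) i) t := by
    intro t i; simpa only [Pi.add_apply, Pi.smul_apply, smul_eq_mul] using hasDerivAt_pi.1 (hz1 t) i
  have hz2c : ∀ t (i : Fin 2), HasDerivAt (fun τ => z2 τ i)
      (u1 t * (Jmat.mulVec (z2 t - Jmat.mulVec (y t))) i) t := by
    intro t i; simpa using hasDerivAt_pi.1 (hz2 t) i
  have hyfc : ∀ t (i : Fin 2), HasDerivAt (fun τ => yf τ i) (lam * (y t i - yf t i)) t := by
    intro t i; simpa using hasDerivAt_pi.1 (hyf t) i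
  have hqfc : ∀ t (i : Fin 2), HasDerivAt (fun τ => qf τ i) (lam * (q t i - qf t i)) t := by
    intro t i; simpa using hasDerivAt_pi.1 (hqf t) i
  have hsfc : ∀ t (i : Fin 2), HasDerivAt (fun τ => sf τ i) (lam * (s t i - sf t i)) t := by
    intro t i; simpa using hasDerivAt_pi.1 (hsf t) i
  -- s components as explicit functions
  have hs0 : (fun τ => s τ 0) = fun τ => z1 τ 0 + z2 τ 0 + y τ 1 := by
    funext τ; rw [hs τ]; simp [Jmul, Jmat, Matrix.vecHead, Matrix.vecTail]
  have hs1 : (fun τ => s τ 1) = fun τ => z1 τ 1 + z2 τ 1 - y τ 0 := by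
    funext τ; rw [hs τ]; simp [Jmul, Jmat, Matrix.vecHead, Matrix.vecTail]
  have hs0t : ∀ τ, s τ 0 = z1 τ 0 + z2 τ 0 + y τ 1 := fun τ => congrFun hs0 τ
  have hs1t : ∀ τ, s τ 1 = z1 τ 1 + z2 τ 1 - y τ 0 := fun τ => congrFun hs1 τ
  -- derivatives of s components
  have hsd0 : ∀ t, HasDerivAt (fun τ => s τ 0) (u1 t * (-(s t 1)) + (-(x t 1))) t := by
    intro t
    rw [hs0]
    have h := ((hz1c t 0).add (hz2c t 0)).add (hyc t 1)
    refine h.congr_deriv ?_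
    simp only [Jmul0, Jmul1, Pi.sub_apply, hs1t]
    ring
  have hsd1 : ∀ t, HasDerivAt (fun τ => s τ 1) (u1 t * (s t 0) + x t 0) t := by
    intro t
    rw [hs1]
    have h := ((hz1c t 1).add (hz2c t 1)).sub (hyc t 0)
    refine h.congr_deriv ?_
    simp only [Jmul0, Jmul1, Pi.sub_apply, hs0t]
    ring
  -- the unfiltered residual δ = Φ·θ23 - (ω s + x) vanishes
  have key : ∀ t,
      (Φ t 0 0 * θ23 0 + Φ t 0 1 * θ23 1 - (ω * s t 0 + x t 0) = 0) ∧
      (Φ t 1 0 * θ23 0 + Φ t 1 1 * θ23 1 - (ω * s t 1 + x t 1) = 0) := by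
    apply rot_ode_zero u1
      (fun τ => Φ τ 0 0 * θ23 0 + Φ τ 0 1 * θ23 1 - (ω * s τ 0 + x τ 0))
      (fun τ => Φ τ 1 0 * θ23 0 + Φ τ 1 1 * θ23 1 - (ω * s τ 1 + x τ 1))
    · intro t
      have h := (((hΦ t 0 0).mul_const (θ23 0)).add ((hΦ t 0 1).mul_const (θ23 1))).sub
        (((hsd0 t).const_mul ω).add (hxc t 0))
      refine h.congr_deriv ?_
      rw [JmulM0, JmulM0, Jmul0]
      ring
    · intro t
      have h := (((hΦ t 1 0).mul_const (θ23 0)).add ((hΦ t 1 1).mul_const (θ23 1))).sub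
        (((hsd1 t).const_mul ω).add (hxc t 1))
      refine h.congr_deriv ?_
      rw [JmulM1, JmulM1, Jmul1]
      ring
    · rw [hΦ0]; rw [hθ23]; simp
    · rw [hΦ0]; rw [hθ23]; simp
  -- the filtered residual components as explicit functions
  set E : Fin 2 → ℝ → ℝ := fun i τ =>
    lam * (y τ i - yf τ i) - qf τ i -
      (sf τ i * ω + -(Φf τ i 0) * θ23 0 + -(Φf τ i 1) * θ23 1) with hE
  have hEeq : ∀ t (i : Fin 2), (Y t - (Ω t).mulVec θ) i = E i t := by
    intro t i
    simp [hY t, hΩ t, hθ, Matrix.mulVec, dotProduct, Fin.sum_univ_three, hE]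
    ring
  have hEd : ∀ (i : Fin 2) t, HasDerivAt (E i) (-(lam * E i t)) t := by
    intro i
    fin_cases i
    · intro t
      show HasDerivAt (E 0) (-(lam * E 0 t)) t
      have h := ((((hyc t 0).sub (hyfc t 0)).const_mul lam).sub (hqfc t 0)).sub
        ((((hsfc t 0).mul_const ω).add ((hΦf t 0 0).neg.mul_const (θ23 0))).add
          ((hΦf t 0 1).neg.mul_const (θ23 1)))
      refine h.congr_deriv ?_
      have k := (key t).1
      simp only [hE]
      linear_combination lam * k
    · intro t
      show HasDerivAt (E 1) (-(lam * E 1 t)) t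
      have h := ((((hyc t 1).sub (hyfc t 1)).const_mul lam).sub (hqfc t 1)).sub
        ((((hsfc t 1).mul_const ω).add ((hΦf t 1 0).neg.mul_const (θ23 0))).add
          ((hΦf t 1 1).neg.mul_const (θ23 1)))
      refine h.congr_deriv ?_
      have k := (key t).2
      simp only [hE]
      linear_combination lam * k
  have hdec : ∀ (i : Fin 2) t, E i t = Real.exp (-(lam * t)) * E i 0 :=
    fun i => decay_ode lam (E i) (hEd i)
  intro t ht
  have hmain : Y t - (Ω t).mulVec θ = Real.exp (-(lam * t)) • (Y 0 - (Ω 0).mulVec θ) := by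
    funext i
    rw [Pi.smul_apply, hEeq t i, hEeq 0 i, hdec i t, smul_eq_mul]
  refine ⟨hmain, ?_⟩
  rw [hmain]
  have hepos : 0 < Real.exp (-(lam * t)) := Real.exp_pos _
  rw [Pi.smul_apply, Pi.smul_apply, smul_eq_mul, smul_eq_mul]
  rw [show (Real.exp (-(lam * t)) * (Y 0 - (Ω 0).mulVec θ) 0) ^ 2 +
      (Real.exp (-(lam * t)) * (Y 0 - (Ω 0).mulVec θ) 1) ^ 2 =
      Real.exp (-(lam * t)) ^ 2 *
        (((Y 0 - (Ω 0).mulVec θ) 0) ^ 2 + ((Y 0 - (Ω 0).mulVec θ) 1) ^ 2) by ring]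
  rw [Real.sqrt_mul (sq_nonneg _), Real.sqrt_sq hepos.le]
end

section
/- Let n ≥ 1 and let K_P, K_I ∈ M_n(ℝ) be symmetric positive definite matrices. Then every λ ∈ ℂ satisfying det(λ²·I_n + λ·K_P + K_I) = 0 (determinant of the complex matrix obtained by regarding K_P, K_I as complex matrices) has strictly negative real part. -/
open Matrix

lemma quadform_posreal {n : ℕ} (K : Matrix (Fin n) (Fin n) ℝ) (hs : K.IsSymm)
    (hK : K.PosDef) (v : Fin n → ℂ) (hv : v ≠ 0) :
    ∃ c : ℝ, 0 < c ∧ star v ⬝ᵥ (K.map (Complex.ofReal ·)) *ᵥ v = (c : ℂ) := by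
  set a : Fin n → ℝ := fun i => (v i).re with ha
  set b : Fin n → ℝ := fun i => (v i).im with hb
  refine ⟨a ⬝ᵥ K *ᵥ a + b ⬝ᵥ K *ᵥ b, ?_, ?_⟩
  · -- positivity
    have hab : a ≠ 0 ∨ b ≠ 0 := by
      by_contra hc
      push_neg at hc
      apply hv
      funext i
      have h1 : a i = 0 := by rw [hc.1]; rfl
      have h2 : b i = 0 := by rw [hc.2]; rfl
      exact Complex.ext h1 h2
    have hsa : ∀ x : Fin n → ℝ, star x ⬝ᵥ K *ᵥ x = x ⬝ᵥ K *ᵥ x := fun x => rfl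
    rcases hab with h0 | h0
    · have h1 : 0 < a ⬝ᵥ K *ᵥ a := by have := hK.dotProduct_mulVec_pos h0; rwa [hsa] at this
      have h2 : 0 ≤ b ⬝ᵥ K *ᵥ b := by have := hK.posSemidef.dotProduct_mulVec_nonneg b; rwa [hsa] at this
      linarith
    · have h1 : 0 ≤ a ⬝ᵥ K *ᵥ a := by have := hK.posSemidef.dotProduct_mulVec_nonneg a; rwa [hsa] at this
      have h2 : 0 < b ⬝ᵥ K *ᵥ b := by have := hK.dotProduct_mulVec_pos h0; rwa [hsa] at this
      linarith
  · -- value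
    have hQ : star v ⬝ᵥ (K.map (Complex.ofReal ·)) *ᵥ v
        = ∑ i, ∑ j, (starRingEnd ℂ) (v i) * ((K i j : ℂ) * v j) := by
      simp [dotProduct, mulVec, Matrix.map_apply, Finset.mul_sum]
    rw [hQ]
    apply Complex.ext
    · simp only [Complex.re_sum, Complex.mul_re, Complex.mul_im, Complex.conj_re,
        Complex.conj_im, Complex.ofReal_re, Complex.ofReal_im]
      simp only [dotProduct, mulVec, Complex.ofReal_re, Finset.mul_sum, Finset.sum_add_distrib]
      rw [← Finset.sum_add_distrib]
      refine Finset.sum_congr rfl fun i _ => ?_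
      rw [← Finset.sum_add_distrib]
      refine Finset.sum_congr rfl fun j _ => ?_
      simp only [ha, hb]
      ring
    · simp only [Complex.im_sum, Complex.mul_re, Complex.mul_im, Complex.conj_re,
        Complex.conj_im, Complex.ofReal_re, Complex.ofReal_im, Complex.ofReal_im]
      have key : ∀ i j : Fin n, (v i).re * (K i j * (v j).im) + -(v i).im * (K i j * (v j).re)
          = K i j * ((v i).re * (v j).im) - K i j * ((v i).im * (v j).re) := by
        intro i j; ring
      have h1 : ∑ i, ∑ j, (K i j * ((v i).re * (v j).im)) = ∑ i, ∑ j, (K i j * ((v i).im * (v j).re)) := by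
        rw [Finset.sum_comm]
        refine Finset.sum_congr rfl fun i _ => Finset.sum_congr rfl fun j _ => ?_
        rw [hs.apply]
        ring
      have : ∀ i j : Fin n,
          ((v i).re * (K i j * (v j).im + 0 * (v j).re) + -(v i).im * (K i j * (v j).re - 0 * (v j).im))
          = K i j * ((v i).re * (v j).im) - K i j * ((v i).im * (v j).re) := by
        intro i j; ring
      simp only [this, Finset.sum_sub_distrib]
      rw [h1, sub_self]

/-- for symmetric positive definite `K_P, K_I ∈ M_n(ℝ)`, every root
`λ ∈ ℂ` of `det(λ²·I + λ·K_P + K_I) = 0` has strictly negative real part. -/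
theorem quadratic_matrix_pencil_roots_stable
    (n : ℕ) (hn : 1 ≤ n) (KP KI : Matrix (Fin n) (Fin n) ℝ)
    (hKPs : KP.IsSymm) (hKIs : KI.IsSymm)
    (hKP : KP.PosDef) (hKI : KI.PosDef)
    (lam : ℂ)
    (h : (lam ^ 2 • (1 : Matrix (Fin n) (Fin n) ℂ) +
          lam • KP.map (Complex.ofReal ·) + KI.map (Complex.ofReal ·)).det = 0) :
    lam.re < 0 := by
  obtain ⟨v, hv, hmv⟩ := Matrix.exists_mulVec_eq_zero_iff.mpr h
  obtain ⟨P, hP, hPeq⟩ := quadform_posreal KP hKPs hKP v hv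
  obtain ⟨Q, hQ, hQeq⟩ := quadform_posreal KI hKIs hKI v hv
  obtain ⟨A, hA, hAeq⟩ := quadform_posreal 1 Matrix.isSymm_one Matrix.PosDef.one v hv
  have hone : ((1 : Matrix (Fin n) (Fin n) ℝ).map (Complex.ofReal ·)) = 1 := by
    rw [Matrix.map_one] <;> simp
  rw [hone] at hAeq
  have h0 : star v ⬝ᵥ ((lam ^ 2 • (1 : Matrix (Fin n) (Fin n) ℂ) +
      lam • KP.map (Complex.ofReal ·) + KI.map (Complex.ofReal ·)) *ᵥ v) = 0 := by
    rw [hmv, dotProduct_zero]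
  rw [add_mulVec, add_mulVec, smul_mulVec, smul_mulVec, dotProduct_add,
    dotProduct_add, dotProduct_smul, dotProduct_smul, hPeq, hQeq, hAeq] at h0
  have key : lam ^ 2 * (A : ℂ) + lam * (P : ℂ) + (Q : ℂ) = 0 := by
    simpa [smul_eq_mul] using h0
  set x := lam.re
  set y := lam.im
  have e1 : (x * x - y * y) * A + x * P + Q = 0 := by
    have := congrArg Complex.re key
    simp only [pow_two, Complex.add_re, Complex.mul_re, Complex.mul_im, Complex.ofReal_re,
      Complex.ofReal_im, Complex.zero_re] at this
    linarith [this]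
  have e2 : (2 * x * y) * A + y * P = 0 := by
    have := congrArg Complex.im key
    simp only [pow_two, Complex.add_im, Complex.mul_re, Complex.mul_im, Complex.ofReal_re,
      Complex.ofReal_im, Complex.zero_im] at this
    linarith [this]
  by_contra hx
  push_neg at hx
  have h3 : (2 * x * y * A + y * P) * y = 0 := by rw [e2, zero_mul]
  nlinarith [sq_nonneg y, sq_nonneg x, mul_pos hA hQ, mul_pos hA hP,
    mul_nonneg (mul_nonneg hx hA.le) (sq_nonneg y), mul_nonneg hx hP.le,
    mul_nonneg (mul_nonneg hx hx) hA.le]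
end

section
/- Let n ≥ 1 and let K_P, K_I ∈ M_n(ℝ) be symmetric positive definite matrices. Then there exist constants c > 0 and γ > 0, depending only on K_P and K_I, such that every twice-differentiable function x : ℝ → ℝⁿ satisfying x''(t) + K_P·x'(t) + K_I·x(t) = 0 for all t obeys ‖x(t)‖ + ‖x'(t)‖ ≤ c·e^{−γt}·(‖x(0)‖ + ‖x'(0)‖) for all t ≥ 0. -/
open Matrix

/-- Euclidean norm of a vector in `ℝⁿ` (represented as `Fin n → ℝ`). -/
noncomputable def euclidEnorm {n : ℕ} (v : Fin n → ℝ) : ℝ := Real.sqrt (∑ i, v i ^ 2)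

namespace Stab9

variable {n : ℕ}

lemma dotp_self_nonneg (v : Fin n → ℝ) : 0 ≤ v ⬝ᵥ v :=
  Finset.sum_nonneg fun i _ => mul_self_nonneg _

lemma enorm_eq (v : Fin n → ℝ) : euclidEnorm v = Real.sqrt (v ⬝ᵥ v) := by
  simp [euclidEnorm, dotProduct, sq]

lemma enorm_nonneg (v : Fin n → ℝ) : 0 ≤ euclidEnorm v := Real.sqrt_nonneg _

lemma sq_enorm (v : Fin n → ℝ) : euclidEnorm v ^ 2 = v ⬝ᵥ v := by
  rw [enorm_eq, Real.sq_sqrt (dotp_self_nonneg v)]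

lemma abs_dotp_le (v w : Fin n → ℝ) : |v ⬝ᵥ w| ≤ euclidEnorm v * euclidEnorm w := by
  have h := Finset.sum_mul_sq_le_sq_mul_sq Finset.univ v w
  have : |v ⬝ᵥ w| = Real.sqrt ((v ⬝ᵥ w) ^ 2) := (Real.sqrt_sq_eq_abs _).symm
  rw [this, euclidEnorm, euclidEnorm]
  rw [← Real.sqrt_mul (Finset.sum_nonneg fun i _ => sq_nonneg _)]
  exact Real.sqrt_le_sqrt h

/-- Frobenius bound for `mulVec`. -/
lemma enorm_mulVec_le (M : Matrix (Fin n) (Fin n) ℝ) (v : Fin n → ℝ) :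
    euclidEnorm (M.mulVec v) ≤ Real.sqrt (∑ i, ∑ j, M i j ^ 2) * euclidEnorm v := by
  rw [euclidEnorm, euclidEnorm, ← Real.sqrt_mul (x := ∑ i, ∑ j, M i j ^ 2) (Finset.sum_nonneg fun i _ =>
    Finset.sum_nonneg fun j _ => sq_nonneg _), Finset.sum_mul]
  apply Real.sqrt_le_sqrt
  apply Finset.sum_le_sum
  intro i _
  exact Finset.sum_mul_sq_le_sq_mul_sq Finset.univ (M i) v

lemma dotp_symm {M : Matrix (Fin n) (Fin n) ℝ} (hs : M.IsSymm) (v w : Fin n → ℝ) :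
    v ⬝ᵥ M.mulVec w = w ⬝ᵥ M.mulVec v := by
  conv_lhs => rw [← hs]
  rw [mulVec_transpose, dotProduct_comm, dotProduct_mulVec]

lemma hasDerivAt_dotp {f g : ℝ → Fin n → ℝ} {fd gd : Fin n → ℝ} {t : ℝ}
    (hf : HasDerivAt f fd t) (hg : HasDerivAt g gd t) :
    HasDerivAt (fun s => f s ⬝ᵥ g s) (fd ⬝ᵥ g t + f t ⬝ᵥ gd) t := by
  have hf' := hasDerivAt_pi.mp hf
  have hg' := hasDerivAt_pi.mp hg
  have h : HasDerivAt (fun s => ∑ i, f s i * g s i)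
      (∑ i, (fd i * g t i + f t i * gd i)) t :=
    HasDerivAt.fun_sum fun i _ => (hf' i).mul (hg' i)
  simpa [dotProduct, Finset.sum_add_distrib] using h

lemma hasDerivAt_mulVec (M : Matrix (Fin n) (Fin n) ℝ) {f : ℝ → Fin n → ℝ}
    {fd : Fin n → ℝ} {t : ℝ} (hf : HasDerivAt f fd t) :
    HasDerivAt (fun s => M.mulVec (f s)) (M.mulVec fd) t := by
  refine hasDerivAt_pi.mpr fun i => ?_
  have hf' := hasDerivAt_pi.mp hf
  have h : HasDerivAt (fun s => ∑ j, M i j * f s j) (∑ j, M i j * fd j) t :=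
    HasDerivAt.fun_sum fun j _ => (hf' j).const_mul (M i j)
  simpa [mulVec, dotProduct] using h

lemma coercive (hn : 1 ≤ n) (M : Matrix (Fin n) (Fin n) ℝ) (hM : M.PosDef) :
    ∃ μ > (0:ℝ), ∀ v : Fin n → ℝ, μ * (v ⬝ᵥ v) ≤ v ⬝ᵥ M.mulVec v := by
  have hpos : ∀ v : Fin n → ℝ, v ≠ 0 → 0 < v ⬝ᵥ M.mulVec v := by
    intro v hv; simpa using hM.dotProduct_mulVec_pos hv
  set E := EuclideanSpace ℝ (Fin n) with hE
  let f : E → ℝ := fun v => (fun i => v i) ⬝ᵥ M.mulVec (fun i => v i)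
  have hg : Continuous fun w : Fin n → ℝ => w ⬝ᵥ M.mulVec w := by
    show Continuous fun w : Fin n → ℝ => ∑ i, w i * ∑ j, M i j * w j
    apply continuous_finset_sum
    intro i _
    exact (continuous_apply i).mul
      (continuous_finset_sum _ fun j _ => continuous_const.mul (continuous_apply j))
  have hc : Continuous f := hg.comp (PiLp.continuous_ofLp (p := 2) (β := fun _ : Fin n => ℝ))
  have hne : (Metric.sphere (0:E) 1).Nonempty := by
    refine ⟨EuclideanSpace.single ⟨0, hn⟩ (1:ℝ), ?_⟩
    rw [mem_sphere_zero_iff_norm, EuclideanSpace.norm_single]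
    norm_num
  obtain ⟨v0, hv0S, hmin⟩ :=
    (isCompact_sphere (0:E) 1).exists_isMinOn hne hc.continuousOn
  have hv0n : ‖v0‖ = 1 := mem_sphere_zero_iff_norm.mp hv0S
  have hv0ne : (fun i => v0 i) ≠ (0 : Fin n → ℝ) := by
    intro h
    have : v0 = 0 := by
      ext i; exact congrFun h i
    rw [this] at hv0n; simp at hv0n
  refine ⟨f v0, hpos _ hv0ne, ?_⟩
  intro v
  by_cases hv : v = (0 : Fin n → ℝ)
  · simp [hv]
  · have hvv : 0 < v ⬝ᵥ v := by
      obtain ⟨i, hi⟩ := Function.ne_iff.mp hv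
      exact Finset.sum_pos' (fun j _ => mul_self_nonneg _)
        ⟨i, Finset.mem_univ i, mul_self_pos.mpr hi⟩
    set r := Real.sqrt (v ⬝ᵥ v) with hr
    have hrpos : 0 < r := Real.sqrt_pos.mpr hvv
    have hr2 : r ^ 2 = v ⬝ᵥ v := Real.sq_sqrt hvv.le
    let vE : E := WithLp.toLp 2 v
    let u : E := r⁻¹ • vE
    have hvE : ‖vE‖ = r := by
      rw [show ‖vE‖ = ‖(vE : EuclideanSpace ℝ (Fin n))‖ from rfl,
        EuclideanSpace.norm_eq, hr]
      congr 1
      simp [vE, dotProduct, sq, Real.norm_eq_abs, sq_abs]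
    have huS : u ∈ Metric.sphere (0:E) 1 := by
      rw [mem_sphere_zero_iff_norm, norm_smul, hvE]
      rw [Real.norm_eq_abs, abs_of_pos (inv_pos.mpr hrpos)]
      exact inv_mul_cancel₀ hrpos.ne'
    have hfu : f u = r⁻¹ * (r⁻¹ * (v ⬝ᵥ M.mulVec v)) := by
      show (r⁻¹ • v) ⬝ᵥ M.mulVec (r⁻¹ • v) = _
      rw [mulVec_smul, smul_dotProduct, dotProduct_smul]
      simp [smul_eq_mul]
    have hle : f v0 ≤ f u := hmin huS
    rw [hfu] at hle
    have hkey : r⁻¹ * (r⁻¹ * (v ⬝ᵥ M.mulVec v)) * r ^ 2 = v ⬝ᵥ M.mulVec v := by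
      field_simp
    have h3 : f v0 * r ^ 2 ≤ v ⬝ᵥ M.mulVec v := by
      have := mul_le_mul_of_nonneg_right hle (sq_nonneg r)
      rwa [hkey] at this
    rw [← hr2]
    exact h3

end Stab9

set_option maxHeartbeats 1000000 in
open Stab9 in
/-- exponential stability of `x'' + K_P x' + K_I x = 0` for symmetric
positive definite `K_P, K_I`: there are constants `c, γ > 0`, depending only on
`K_P` and `K_I`, bounding every solution. -/
theorem second_order_system_exponentially_stable
    (n : ℕ) (hn : 1 ≤ n) (KP KI : Matrix (Fin n) (Fin n) ℝ)
    (hKPs : KP.IsSymm) (hKIs : KI.IsSymm)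
    (hKP : KP.PosDef) (hKI : KI.PosDef) :
    ∃ c > (0 : ℝ), ∃ γ > (0 : ℝ),
      ∀ (x x' x'' : ℝ → Fin n → ℝ),
        (∀ t, HasDerivAt x (x' t) t) →
        (∀ t, HasDerivAt x' (x'' t) t) →
        (∀ t, x'' t + KP.mulVec (x' t) + KI.mulVec (x t) = 0) →
        ∀ t ≥ (0 : ℝ),
          euclidEnorm (x t) + euclidEnorm (x' t) ≤
            c * Real.exp (-(γ * t)) * (euclidEnorm (x 0) + euclidEnorm (x' 0)) := by
  obtain ⟨μP, hμP, hcP⟩ := Stab9.coercive hn KP hKP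
  obtain ⟨μI, hμI, hcI⟩ := Stab9.coercive hn KI hKI
  set CP : ℝ := Real.sqrt (∑ i, ∑ j, KP i j ^ 2) with hCPdef
  set CI : ℝ := Real.sqrt (∑ i, ∑ j, KI i j ^ 2) with hCIdef
  have hCP0 : 0 ≤ CP := Real.sqrt_nonneg _
  have hCI0 : 0 ≤ CI := Real.sqrt_nonneg _
  have hden : (0:ℝ) < 2 + CP ^ 2 / μI := by positivity
  set ε : ℝ := min (μP / (2 + CP ^ 2 / μI)) (min (1/2) (μI/2)) with hεdef
  have hεpos : 0 < ε := by
    apply lt_min (div_pos hμP hden)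
    apply lt_min <;> [norm_num; linarith]
  have hε1 : ε ≤ 1/2 := (min_le_right _ _).trans (min_le_left _ _)
  have hε2 : ε ≤ μI/2 := (min_le_right _ _).trans (min_le_right _ _)
  have hε3 : ε * (2 + CP ^ 2 / μI) ≤ μP := by
    calc ε * (2 + CP ^ 2 / μI)
        ≤ (μP / (2 + CP ^ 2 / μI)) * (2 + CP ^ 2 / μI) :=
          mul_le_mul_of_nonneg_right (min_le_left _ _) hden.le
      _ = μP := div_mul_cancel₀ _ hden.ne'
  have hε3' : ε * 2 * μI + ε * CP ^ 2 ≤ μP * μI := by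
    have h := mul_le_mul_of_nonneg_right hε3 hμI.le
    have : ε * (2 + CP ^ 2 / μI) * μI = ε * 2 * μI + ε * CP ^ 2 := by
      field_simp
    linarith [this ▸ h]
  set α : ℝ := min (1/2 : ℝ) (μI/2) with hαdef
  have hαpos : 0 < α := lt_min (by norm_num) (by linarith)
  have hα1 : α ≤ 1/2 := min_le_left _ _
  have hα2 : α ≤ μI/2 := min_le_right _ _
  set β : ℝ := CI + 2 with hβdef
  have hβpos : 0 < β := by linarith
  set m : ℝ := min μP (ε * μI) with hmdef
  have hmpos : 0 < m := lt_min hμP (mul_pos hεpos hμI)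
  have hm1 : m ≤ μP := min_le_left _ _
  have hm2 : m ≤ ε * μI := min_le_right _ _
  set γ2 : ℝ := m / β with hγ2def
  have hγ2pos : 0 < γ2 := div_pos hmpos hβpos
  have hγ2β : γ2 * β = m := div_mul_cancel₀ _ hβpos.ne'
  refine ⟨Real.sqrt (2 * β / α), Real.sqrt_pos.mpr (by positivity), γ2 / 2,
    by positivity, ?_⟩
  intro x x' x'' hdx hdx' heq t ht
  set V : ℝ → ℝ := fun s =>
    x' s ⬝ᵥ x' s + x s ⬝ᵥ KI.mulVec (x s) + (2*ε) * (x s ⬝ᵥ x' s) with hVdef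
  set Vd : ℝ → ℝ := fun s =>
    (x'' s ⬝ᵥ x' s + x' s ⬝ᵥ x'' s)
      + (x' s ⬝ᵥ KI.mulVec (x s) + x s ⬝ᵥ KI.mulVec (x' s))
      + (2*ε) * (x' s ⬝ᵥ x' s + x s ⬝ᵥ x'' s) with hVddef
  have hVder : ∀ s, HasDerivAt V (Vd s) s := by
    intro s
    exact ((Stab9.hasDerivAt_dotp (hdx' s) (hdx' s)).add
      (Stab9.hasDerivAt_dotp (hdx s) (Stab9.hasDerivAt_mulVec KI (hdx s)))).add
      ((Stab9.hasDerivAt_dotp (hdx s) (hdx' s)).const_mul (2*ε))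
  -- pointwise estimates
  have hxx : ∀ s, x'' s = -(KP.mulVec (x' s)) + -(KI.mulVec (x s)) := by
    intro s
    have h := heq s
    rw [add_assoc] at h
    rw [eq_neg_of_add_eq_zero_left h, neg_add]
  have hVub : ∀ s, V s ≤ β * (euclidEnorm (x s) ^ 2 + euclidEnorm (x' s) ^ 2) := by
    intro s
    set a := euclidEnorm (x s) with ha
    set b := euclidEnorm (x' s) with hb
    have ha0 : 0 ≤ a := enorm_nonneg _
    have hb0 : 0 ≤ b := enorm_nonneg _
    have hb2 : x' s ⬝ᵥ x' s = b ^ 2 := (sq_enorm _).symm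
    have h4 : |x s ⬝ᵥ KI.mulVec (x s)| ≤ a * (CI * a) :=
      (Stab9.abs_dotp_le _ _).trans
        (mul_le_mul_of_nonneg_left (Stab9.enorm_mulVec_le KI (x s)) ha0)
    have h5 : |x s ⬝ᵥ x' s| ≤ a * b := Stab9.abs_dotp_le _ _
    have h4' := abs_le.mp h4
    have h5' := abs_le.mp h5
    have hab : 0 ≤ a * b := mul_nonneg ha0 hb0
    simp only [hVdef, hβdef]
    linarith [h4'.2, mul_le_mul_of_nonneg_left h5'.2 (by linarith : (0:ℝ) ≤ 2*ε),
      mul_le_mul_of_nonneg_right hε1 hab, sq_nonneg (a - b),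
      sq_nonneg a, sq_nonneg b,
      mul_nonneg hCI0 (sq_nonneg a), mul_nonneg hCI0 (sq_nonneg b)]
  have hVlb : ∀ s, α * (euclidEnorm (x s) ^ 2 + euclidEnorm (x' s) ^ 2) ≤ V s := by
    intro s
    set a := euclidEnorm (x s) with ha
    set b := euclidEnorm (x' s) with hb
    have ha0 : 0 ≤ a := enorm_nonneg _
    have hb0 : 0 ≤ b := enorm_nonneg _
    have hb2 : x' s ⬝ᵥ x' s = b ^ 2 := (sq_enorm _).symm
    have ha2 : a ^ 2 = x s ⬝ᵥ x s := sq_enorm _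
    have h2 : μI * a ^ 2 ≤ x s ⬝ᵥ KI.mulVec (x s) := by rw [ha2]; exact hcI _
    have h5' := abs_le.mp (show |x s ⬝ᵥ x' s| ≤ a * b from Stab9.abs_dotp_le _ _)
    simp only [hVdef]
    linarith [h2, mul_le_mul_of_nonneg_left h5'.1 (by linarith : (0:ℝ) ≤ 2*ε),
      mul_nonneg hεpos.le (sq_nonneg (a - b)),
      mul_le_mul_of_nonneg_right (show α ≤ μI - ε by linarith) (sq_nonneg a),
      mul_le_mul_of_nonneg_right (show α ≤ 1 - ε by linarith) (sq_nonneg b),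
      sq_nonneg a, sq_nonneg b]
  have hkey : ∀ s, Vd s + γ2 * V s ≤ 0 := by
    intro s
    set a := euclidEnorm (x s) with ha
    set b := euclidEnorm (x' s) with hb
    have ha0 : 0 ≤ a := enorm_nonneg _
    have hb0 : 0 ≤ b := enorm_nonneg _
    have ha2 : a ^ 2 = x s ⬝ᵥ x s := sq_enorm _
    have hb2 : b ^ 2 = x' s ⬝ᵥ x' s := sq_enorm _
    have hVdval : Vd s = -(2*(x' s ⬝ᵥ KP.mulVec (x' s))) + 2*ε*(x' s ⬝ᵥ x' s)
        - 2*ε*(x s ⬝ᵥ KP.mulVec (x' s)) - 2*ε*(x s ⬝ᵥ KI.mulVec (x s)) := by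
      simp only [hVddef]
      rw [hxx s]
      simp only [add_dotProduct, neg_dotProduct, dotProduct_add, dotProduct_neg]
      rw [dotProduct_comm (KP.mulVec (x' s)) (x' s),
        dotProduct_comm (KI.mulVec (x s)) (x' s),
        Stab9.dotp_symm hKIs (x' s) (x s)]
      ring
    have h1 : μP * b ^ 2 ≤ x' s ⬝ᵥ KP.mulVec (x' s) := by rw [hb2]; exact hcP _
    have h2 : μI * a ^ 2 ≤ x s ⬝ᵥ KI.mulVec (x s) := by rw [ha2]; exact hcI _
    have h3 : |x s ⬝ᵥ KP.mulVec (x' s)| ≤ a * (CP * b) :=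
      (Stab9.abs_dotp_le _ _).trans
        (mul_le_mul_of_nonneg_left (Stab9.enorm_mulVec_le KP (x' s)) ha0)
    have h3' := abs_le.mp h3
    have hVdval' : Vd s = -(2*(x' s ⬝ᵥ KP.mulVec (x' s))) + 2*ε*b^2
        - 2*ε*(x s ⬝ᵥ KP.mulVec (x' s)) - 2*ε*(x s ⬝ᵥ KI.mulVec (x s)) := by
      rw [hVdval, ← hb2]
    have hVd_ub : Vd s ≤ -(m * (a ^ 2 + b ^ 2)) := by
      rw [hVdval']
      have hd : CP ^ 2 / μI * μI = CP ^ 2 := div_mul_cancel₀ _ hμI.ne'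
      have hstep : 2 * CP * a * b ≤ μI * a ^ 2 + CP ^ 2 / μI * b ^ 2 := by
        have hsμ : Real.sqrt μI ^ 2 = μI := Real.sq_sqrt hμI.le
        have hsμ0 : Real.sqrt μI ≠ 0 := by positivity
        have h2m := two_mul_le_add_sq (Real.sqrt μI * a) (CP / Real.sqrt μI * b)
        have e1 : 2 * (Real.sqrt μI * a) * (CP / Real.sqrt μI * b)
            = 2 * CP * a * b := by field_simp
        have e2 : (Real.sqrt μI * a) ^ 2 = μI * a ^ 2 := by rw [mul_pow, hsμ]
        have e3 : (CP / Real.sqrt μI * b) ^ 2 = CP ^ 2 / μI * b ^ 2 := by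
          rw [mul_pow, div_pow, hsμ]
        rw [e1, e2, e3] at h2m
        exact h2m
      have hq2 : b ^ 2 = x' s ⬝ᵥ x' s := hb2
      linarith [h1,
        mul_le_mul_of_nonneg_left h2 (by linarith : (0:ℝ) ≤ 2*ε),
        mul_le_mul_of_nonneg_left h3'.1 (by linarith : (0:ℝ) ≤ 2*ε),
        mul_le_mul_of_nonneg_left hstep hεpos.le,
        mul_le_mul_of_nonneg_right hε3 (sq_nonneg b),
        mul_le_mul_of_nonneg_right hm1 (sq_nonneg b),
        mul_le_mul_of_nonneg_right hm2 (sq_nonneg a), sq_nonneg a, sq_nonneg b]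
    have hVub' := mul_le_mul_of_nonneg_left (hVub s) hγ2pos.le
    have hfold : γ2 * (β * (a ^ 2 + b ^ 2)) = m * (a ^ 2 + b ^ 2) := by
      rw [← mul_assoc, hγ2β]
    linarith [hVd_ub, hVub', hfold ▸ hVub']
  -- Gronwall
  set g : ℝ → ℝ := fun s => Real.exp (γ2 * s) * V s with hgdef
  have hgder : ∀ s, HasDerivAt g
      (Real.exp (γ2*s) * γ2 * V s + Real.exp (γ2*s) * Vd s) s := by
    intro s
    have he : HasDerivAt (fun u => Real.exp (γ2*u)) (Real.exp (γ2*s) * γ2) s := by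
      simpa using ((hasDerivAt_id s).const_mul γ2).exp
    exact he.mul (hVder s)
  have hanti : Antitone g := by
    apply antitone_of_deriv_nonpos
    · intro s; exact (hgder s).differentiableAt
    · intro s
      rw [(hgder s).deriv]
      have hk := hkey s
      have hexp : (0:ℝ) < Real.exp (γ2*s) := Real.exp_pos _
      have := mul_le_mul_of_nonneg_left hk hexp.le
      rw [mul_zero] at this
      linarith [this]
  have hVt : V t ≤ Real.exp (-(γ2*t)) * V 0 := by
    have h := hanti ht
    simp only [hgdef, mul_zero, Real.exp_zero, one_mul] at h
    have h2 := mul_le_mul_of_nonneg_left h (Real.exp_pos (-(γ2*t))).le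
    have h3 : Real.exp (-(γ2*t)) * (Real.exp (γ2*t) * V t) = V t := by
      rw [← mul_assoc, ← Real.exp_add]
      simp
    linarith [h3 ▸ h2]
  -- assemble
  set a := euclidEnorm (x t); set b := euclidEnorm (x' t)
  set a0 := euclidEnorm (x 0); set b0 := euclidEnorm (x' 0)
  have ha0 : 0 ≤ a := enorm_nonneg _
  have hb0 : 0 ≤ b := enorm_nonneg _
  have ha00 : 0 ≤ a0 := enorm_nonneg _
  have hb00 : 0 ≤ b0 := enorm_nonneg _
  have hE : (0:ℝ) < Real.exp (-(γ2*t)) := Real.exp_pos _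
  have hV0 : V 0 ≤ β * (a0 + b0) ^ 2 := by
    have h := hVub 0
    linarith [mul_le_mul_of_nonneg_left
      (show (0:ℝ) ≤ 2 * (a0 * b0) from by positivity) hβpos.le]
  have hlb := hVlb t
  have hmain : α * (a + b) ^ 2 ≤ 2 * β * Real.exp (-(γ2*t)) * (a0 + b0) ^ 2 := by
    linarith [mul_le_mul_of_nonneg_left hV0
        (by positivity : (0:ℝ) ≤ 2 * Real.exp (-(γ2*t))),
      mul_nonneg hαpos.le (sq_nonneg (a - b)), hVt, hlb]
  set R : ℝ := Real.sqrt (2 * β / α) * Real.exp (-(γ2/2 * t)) * (a0 + b0) with hRdef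
  have hR0 : 0 ≤ R := by positivity
  have hexp2 : Real.exp (-(γ2/2*t)) ^ 2 = Real.exp (-(γ2*t)) := by
    rw [sq, ← Real.exp_add]
    congr 1
    ring
  have hR2 : R ^ 2 = 2 * β / α * Real.exp (-(γ2*t)) * (a0 + b0) ^ 2 := by
    simp only [hRdef, mul_pow, hexp2]
    rw [Real.sq_sqrt (by positivity)]
  have hfin : (a + b) ^ 2 ≤ R ^ 2 := by
    rw [hR2]
    rw [show 2 * β / α * Real.exp (-(γ2*t)) * (a0 + b0) ^ 2
        = 2 * β * Real.exp (-(γ2*t)) * (a0 + b0) ^ 2 / α by ring]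
    rw [le_div_iff₀ hαpos]
    linarith [hmain]
  calc a + b = Real.sqrt ((a + b) ^ 2) := (Real.sqrt_sq (by positivity)).symm
    _ ≤ Real.sqrt (R ^ 2) := Real.sqrt_le_sqrt hfin
    _ = R := Real.sqrt_sq hR0
end

section
/- Let r, L > 0, let K_P, K_I ∈ M₂(ℝ) be symmetric positive definite, and let y_ref ∈ ℝ² be constant. Let y34 : ℝ → ℝ² and u₁ : ℝ → ℝ be continuous, and suppose x_c, y : ℝ → ℝ² are differentiable and satisfy for all t: x_c'(t) = y(t) − y_ref and L·y'(t) = −r·y(t) + u23(t) − y34(t) + L·u₁(t)·J·y(t), where u23(t) := −K_P·(y(t) − y_ref) − K_I·x_c(t) + y34(t) − L·u₁(t)·J·y(t). Then there exist c > 0 and γ > 0 depending only on r, L, K_P, K_I such that ‖y(t) − y_ref‖ ≤ c·e^{−γt}·(‖y(0) − y_ref‖ + ‖x_c(0) + r·K_I⁻¹·y_ref‖) for all t ≥ 0; in particular y(t) → y_ref exponentially as t → ∞. -/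
set_option maxHeartbeats 1000000


open Matrix

/-- Euclidean norm of a vector in `ℝ²` (represented as `Fin 2 → ℝ`). -/
noncomputable def enorm2 (v : Fin 2 → ℝ) : ℝ := Real.sqrt (v 0 ^ 2 + v 1 ^ 2)


lemma psd2 {p q s : ℝ} (hp : 0 < p) (hps : q^2 < p*s) (x0 x1 : ℝ) :
    0 ≤ p*x0^2 + 2*q*x0*x1 + s*x1^2 := by
  nlinarith [sq_nonneg (p*x0 + q*x1), sq_nonneg x1, sq_nonneg x0]

lemma upper2 {a b c : ℝ} (ha : 0 < a) (hac : b^2 < a*c) (z0 z1 : ℝ) :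
    a*z0^2 + 2*b*z0*z1 + c*z1^2 ≤ (a+c)*(z0^2+z1^2) := by
  nlinarith [sq_nonneg (b*z0 - a*z1), sq_nonneg z0]

lemma lower2 {a b c : ℝ} (ha : 0 < a) (hc : 0 < c) (hac : b^2 < a*c) (z0 z1 : ℝ) :
    (a*c - b^2)/(a+c) * (z0^2+z1^2) ≤ a*z0^2 + 2*b*z0*z1 + c*z1^2 := by
  rw [div_mul_eq_mul_div, div_le_iff₀ (by linarith)]
  nlinarith [sq_nonneg (a*z0 + b*z1), sq_nonneg (b*z0 + c*z1)]

lemma keyquad (r L p q s a b c : ℝ) (hr : 0 < r) (hL : 0 < L)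
    (hp : 0 < p) (hs : 0 < s) (hps : q^2 < p*s)
    (ha : 0 < a) (hc : 0 < c) (hac : b^2 < a*c) :
    ∃ ε γ m0 M0 : ℝ, 0 < ε ∧ 0 < γ ∧ 0 < m0 ∧ 0 < M0 ∧
    ∀ e0 e1 z0 z1 : ℝ,
      ((-(2*((r+p)*e0^2 + 2*q*e0*e1 + (r+s)*e1^2)) + 2*L*ε*(e0^2+e1^2)
        - 2*ε*((r+p)*e0*z0 + q*e0*z1 + q*e1*z0 + (r+s)*e1*z1)
        - 2*ε*(a*z0^2 + 2*b*z0*z1 + c*z1^2))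
        + 2*γ*(L*(e0^2+e1^2) + (a*z0^2+2*b*z0*z1+c*z1^2) + 2*L*ε*(e0*z0+e1*z1)) ≤ 0)
      ∧ m0*(e0^2+e1^2+z0^2+z1^2)
          ≤ L*(e0^2+e1^2) + (a*z0^2+2*b*z0*z1+c*z1^2) + 2*L*ε*(e0*z0+e1*z1)
      ∧ L*(e0^2+e1^2) + (a*z0^2+2*b*z0*z1+c*z1^2) + 2*L*ε*(e0*z0+e1*z1)
          ≤ M0*(e0^2+e1^2+z0^2+z1^2) := by
  set N : ℝ := 2*r + p + s with hNdef
  set mI : ℝ := (a*c - b^2)/(a+c) with hmIdef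
  set MI : ℝ := a + c with hMIdef
  have hN : 0 < N := by simp only [hNdef]; linarith only [hr, hp, hs]
  have hMI : 0 < MI := by simp only [hMIdef]; linarith only [ha, hc]
  have hmI : 0 < mI :=
    div_pos (by linarith only [hac, sq_nonneg b]) (by linarith only [ha, hc])
  set δ : ℝ := N/mI with hδdef
  have hδ : 0 < δ := div_pos hN hmI
  have hδmI : δ * mI = N := div_mul_cancel₀ _ (ne_of_gt hmI)
  have hP : 0 < r + p := by linarith only [hr, hp]
  have hS : 0 < r + s := by linarith only [hr, hs]
  have hqPS : q^2 < (r+p)*(r+s) := by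
    nlinarith only [hps, mul_pos hr hr, mul_pos hr hp, mul_pos hr hs]
  set ε : ℝ := min (r/(2*L+δ*N)) (min (1/2) (mI/(2*L))) with hεdef
  have hX : (0:ℝ) < 2*L + δ*N := by positivity
  have hε : 0 < ε := by
    apply lt_min (div_pos hr hX)
    exact lt_min one_half_pos (div_pos hmI (by positivity))
  have hε1 : ε*(2*L+δ*N) ≤ r := by
    have h1 : ε ≤ r/(2*L+δ*N) := min_le_left _ _
    calc ε*(2*L+δ*N) ≤ (r/(2*L+δ*N))*(2*L+δ*N) :=
          mul_le_mul_of_nonneg_right h1 hX.le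
      _ = r := div_mul_cancel₀ _ (ne_of_gt hX)
  have hεL : L*ε ≤ L/2 := by
    have h1 : ε ≤ 1/2 := le_trans (min_le_right _ _) (min_le_left _ _)
    have h2 := mul_le_mul_of_nonneg_left h1 hL.le
    linarith only [h2]
  have hεmI : L*ε ≤ mI/2 := by
    have h1 : ε ≤ mI/(2*L) := le_trans (min_le_right _ _) (min_le_right _ _)
    rw [le_div_iff₀ (by positivity)] at h1
    linarith only [h1]
  set γ : ℝ := min (r/(2*(L+L*ε))) (ε*mI/(2*(MI+L*ε))) with hγdef
  have hLε : (0:ℝ) < L + L*ε := by positivity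
  have hMIε : (0:ℝ) < MI + L*ε := by positivity
  have hγ : 0 < γ := lt_min (div_pos hr (by positivity)) (div_pos (by positivity) (by positivity))
  have hγ1 : 2*γ*(L+L*ε) ≤ r := by
    have h1 : γ ≤ r/(2*(L+L*ε)) := min_le_left _ _
    rw [le_div_iff₀ (by positivity)] at h1
    linarith only [h1]
  have hγ2 : 2*γ*(MI+L*ε) ≤ ε*mI := by
    have h1 : γ ≤ ε*mI/(2*(MI+L*ε)) := min_le_right _ _
    rw [le_div_iff₀ (by positivity)] at h1
    linarith only [h1]
  set m0 : ℝ := min (L - L*ε) (mI - L*ε) with hm0def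
  have hm0 : 0 < m0 :=
    lt_min (by linarith only [hεL, hL]) (by linarith only [hεmI, hmI])
  set M0 : ℝ := L + MI + 2*L*ε with hM0def
  have hM0 : 0 < M0 := by positivity
  refine ⟨ε, γ, m0, M0, hε, hγ, hm0, hM0, ?_⟩
  intro e0 e1 z0 z1
  have hE : (0:ℝ) ≤ e0^2 + e1^2 := by positivity
  have hZ : (0:ℝ) ≤ z0^2 + z1^2 := by positivity
  have hA_low : r*(e0^2+e1^2) ≤ (r+p)*e0^2+2*q*e0*e1+(r+s)*e1^2 := by
    linarith only [psd2 hp hps e0 e1]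
  have hA_up : (r+p)*e0^2+2*q*e0*e1+(r+s)*e1^2 ≤ N*(e0^2+e1^2) := by
    have h := upper2 hP hqPS e0 e1
    simp only [hNdef]; linarith only [h]
  have hAz_up : (r+p)*z0^2+2*q*z0*z1+(r+s)*z1^2 ≤ N*(z0^2+z1^2) := by
    have h := upper2 hP hqPS z0 z1
    simp only [hNdef]; linarith only [h]
  have hB_low : mI*(z0^2+z1^2) ≤ a*z0^2+2*b*z0*z1+c*z1^2 := lower2 ha hc hac z0 z1
  have hB_up : a*z0^2+2*b*z0*z1+c*z1^2 ≤ MI*(z0^2+z1^2) := upper2 ha hac z0 z1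
  refine ⟨?_, ?_, ?_⟩
  · -- decay inequality
    have hpsd := psd2 hP hqPS (δ*e0+z0) (δ*e1+z1)
    have hcross : -2*((r+p)*e0*z0 + q*e0*z1 + q*e1*z0 + (r+s)*e1*z1)
        ≤ δ*N*(e0^2+e1^2) + mI*(z0^2+z1^2) := by
      rw [← mul_le_mul_iff_of_pos_right hδ]
      have t1 : 0 ≤ δ^2 * (N*(e0^2+e1^2) - ((r+p)*e0^2+2*q*e0*e1+(r+s)*e1^2)) :=
        mul_nonneg (sq_nonneg δ) (by linarith only [hA_up])
      have t2 : 0 ≤ mI*(z0^2+z1^2)*δ - ((r+p)*z0^2+2*q*z0*z1+(r+s)*z1^2) := by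
        have h5 : N*(z0^2+z1^2) = mI*(z0^2+z1^2)*δ := by rw [← hδmI]; ring
        linarith only [hAz_up, h5]
      linarith only [hpsd, t1, t2]
    have P1 : ε*(-2*((r+p)*e0*z0 + q*e0*z1 + q*e1*z0 + (r+s)*e1*z1))
        ≤ ε*(δ*N*(e0^2+e1^2) + mI*(z0^2+z1^2)) := mul_le_mul_of_nonneg_left hcross hε.le
    have P2 : (2*ε)*(mI*(z0^2+z1^2)) ≤ (2*ε)*(a*z0^2+2*b*z0*z1+c*z1^2) :=
      mul_le_mul_of_nonneg_left hB_low (by positivity)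
    have P3 : (2*γ)*(a*z0^2+2*b*z0*z1+c*z1^2) ≤ (2*γ)*(MI*(z0^2+z1^2)) :=
      mul_le_mul_of_nonneg_left hB_up (by positivity)
    have hD : 2*(e0*z0+e1*z1) ≤ (e0^2+e1^2) + (z0^2+z1^2) := by
      nlinarith only [sq_nonneg (e0-z0), sq_nonneg (e1-z1)]
    have P4 : (2*γ*L*ε)*(2*(e0*z0+e1*z1)) ≤ (2*γ*L*ε)*((e0^2+e1^2)+(z0^2+z1^2)) :=
      mul_le_mul_of_nonneg_left hD (by positivity)
    have cE : (ε*(2*L+δ*N) + 2*γ*(L+L*ε) - 2*r) * (e0^2+e1^2) ≤ 0 :=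
      mul_nonpos_iff.mpr (Or.inr ⟨by linarith only [hε1, hγ1], hE⟩)
    have cZ : (-(ε*mI) + 2*γ*(MI+L*ε)) * (z0^2+z1^2) ≤ 0 :=
      mul_nonpos_iff.mpr (Or.inr ⟨by linarith only [hγ2], hZ⟩)
    linarith only [P1, P2, P3, P4, hA_low, cE, cZ]
  · -- lower bound for V
    have hD2 : -((e0^2+e1^2) + (z0^2+z1^2)) ≤ 2*(e0*z0+e1*z1) := by
      nlinarith only [sq_nonneg (e0+z0), sq_nonneg (e1+z1)]
    have S2 := mul_le_mul_of_nonneg_left hD2 (le_of_lt (mul_pos hL hε))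
    have S3 : 0 ≤ (L - L*ε - m0)*(e0^2+e1^2) := by
      apply mul_nonneg _ hE
      have h := min_le_left (L - L*ε) (mI - L*ε)
      linarith only [h]
    have S4 : 0 ≤ (mI - L*ε - m0)*(z0^2+z1^2) := by
      apply mul_nonneg _ hZ
      have h := min_le_right (L - L*ε) (mI - L*ε)
      linarith only [h]
    linarith only [hB_low, S2, S3, S4]
  · -- upper bound for V
    have hD : 2*(e0*z0+e1*z1) ≤ (e0^2+e1^2) + (z0^2+z1^2) := by
      nlinarith only [sq_nonneg (e0-z0), sq_nonneg (e1-z1)]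
    have S2 := mul_le_mul_of_nonneg_left hD (le_of_lt (mul_pos hL hε))
    have S3 : 0 ≤ (M0 - L - L*ε)*(e0^2+e1^2) := by
      apply mul_nonneg _ hE
      have h2 := (mul_pos hL hε).le
      simp only [hM0def]
      linarith only [hMI, h2]
    have S4 : 0 ≤ (M0 - MI - L*ε)*(z0^2+z1^2) := by
      apply mul_nonneg _ hZ
      have h2 := (mul_pos hL hε).le
      simp only [hM0def]
      linarith only [hL, h2]
    linarith only [hB_up, S2, S3, S4]

lemma posdef_entries {K : Matrix (Fin 2) (Fin 2) ℝ} (hKs : K.IsSymm) (hK : K.PosDef) :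
    0 < K 0 0 ∧ 0 < K 1 1 ∧ (K 0 1)^2 < K 0 0 * K 1 1 := by
  have hK10 : K 1 0 = K 0 1 := hKs.apply 0 1
  have quad : ∀ x : Fin 2 → ℝ, x ≠ 0 →
      0 < K 0 0 * x 0 ^2 + 2*(K 0 1)*(x 0)*(x 1) + K 1 1 * x 1 ^2 := by
    intro x hx
    have h := hK.dotProduct_mulVec_pos hx
    rw [star_trivial] at h
    have e : x ⬝ᵥ K.mulVec x
        = K 0 0 * x 0 ^2 + 2*(K 0 1)*(x 0)*(x 1) + K 1 1 * x 1 ^2 := by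
      simp [Matrix.mulVec, dotProduct, Fin.sum_univ_two, hK10]; ring
    rw [e] at h; exact h
  have hp : 0 < K 0 0 := by
    have h := quad ![1, 0] (by intro hcon; have := congrFun hcon 0; simp at this)
    simpa using h
  have hs : 0 < K 1 1 := by
    have h := quad ![0, 1] (by intro hcon; have := congrFun hcon 1; simp at this)
    simpa using h
  have hps : (K 0 1)^2 < K 0 0 * K 1 1 := by
    have h := quad ![K 0 1, -(K 0 0)]
      (by intro hcon; have := congrFun hcon 1; simp at this; exact absurd this (by linarith))
    simp at h
    nlinarith only [h, hp]
  exact ⟨hp, hs, hps⟩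


/-- Proposition 2: the partial-linearizing PI current controller
`u23 = -K_P(y - y_ref) - K_I x_c + y34 - L·u₁·J·y` ensures exponential regulation
of the converter current `y` to the constant reference `y_ref`, with rate and
overshoot constants depending only on `r, L, K_P, K_I`. -/
theorem pi_current_controller_exponential_regulation
    (r L : ℝ) (hr : 0 < r) (hL : 0 < L)
    (KP KI : Matrix (Fin 2) (Fin 2) ℝ)
    (hKPs : KP.IsSymm) (hKIs : KI.IsSymm)
    (hKP : KP.PosDef) (hKI : KI.PosDef) :
    ∃ c > (0 : ℝ), ∃ γ > (0 : ℝ),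
      ∀ (yref : Fin 2 → ℝ) (y34 : ℝ → Fin 2 → ℝ) (u1 : ℝ → ℝ),
        Continuous y34 → Continuous u1 →
        ∀ (xc y y' u23 : ℝ → Fin 2 → ℝ),
          (∀ t, u23 t = -KP.mulVec (y t - yref) - KI.mulVec (xc t) + y34 t
              - L • (u1 t • Jmat.mulVec (y t))) →
          (∀ t, HasDerivAt xc (y t - yref) t) →
          (∀ t, HasDerivAt y (y' t) t) →
          (∀ t, L • y' t = (-r) • y t + u23 t - y34 t + L • (u1 t • Jmat.mulVec (y t))) →
          ∀ t ≥ (0 : ℝ),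
            enorm2 (y t - yref) ≤
              c * Real.exp (-(γ * t)) *
                (enorm2 (y 0 - yref) + enorm2 (xc 0 + r • KI⁻¹.mulVec yref)) := by
  obtain ⟨hp, hs, hps⟩ := posdef_entries hKPs hKP
  obtain ⟨ha, hc, hac⟩ := posdef_entries hKIs hKI
  have hKP10 : KP 1 0 = KP 0 1 := hKPs.apply 0 1
  have hKI10 : KI 1 0 = KI 0 1 := hKIs.apply 0 1
  obtain ⟨ε, γ, m0, M0, hε, hγ, hm0, hM0, hkey⟩ :=
    keyquad r L (KP 0 0) (KP 0 1) (KP 1 1) (KI 0 0) (KI 0 1) (KI 1 1)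
      hr hL hp hs hps ha hc hac
  refine ⟨Real.sqrt (M0/m0), Real.sqrt_pos.mpr (div_pos hM0 hm0), γ, hγ, ?_⟩
  intro yref y34 u1 _ _ xc y y' u23 hu23 hxc hy hode t ht
  -- inverse fact
  have hdet : 0 < KI.det := by
    rw [Matrix.det_fin_two, hKI10]; nlinarith only [hac]
  set w : Fin 2 → ℝ := KI⁻¹.mulVec yref with hwdef
  have hinv : KI.mulVec w = yref := by
    rw [hwdef, Matrix.mulVec_mulVec,
      Matrix.mul_nonsing_inv _ (isUnit_iff_ne_zero.mpr (ne_of_gt hdet)), Matrix.one_mulVec]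
  have hw0 : KI 0 0 * w 0 + KI 0 1 * w 1 = yref 0 := by
    have h := congrFun hinv 0
    simpa [Matrix.mulVec, dotProduct, Fin.sum_univ_two] using h
  have hw1 : KI 0 1 * w 0 + KI 1 1 * w 1 = yref 1 := by
    have h := congrFun hinv 1
    rw [← hKI10]
    simpa [Matrix.mulVec, dotProduct, Fin.sum_univ_two] using h
  -- scalar ODE
  have hcomp : ∀ (τ : ℝ) (i : Fin 2), L * y' τ i
      = -r * y τ i - (KP.mulVec (y τ - yref)) i - (KI.mulVec (xc τ)) i := by
    intro τ i
    have h := congrFun (hode τ) i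
    rw [hu23 τ] at h
    simp only [Pi.add_apply, Pi.sub_apply, Pi.smul_apply, Pi.neg_apply, smul_eq_mul] at h
    linarith only [h]
  have hsc0 : ∀ τ : ℝ, L * y' τ 0
      = -((r + KP 0 0) * (y τ 0 - yref 0)) - KP 0 1 * (y τ 1 - yref 1)
        - KI 0 0 * (xc τ 0 + r * w 0) - KI 0 1 * (xc τ 1 + r * w 1) := by
    intro τ
    have h := hcomp τ 0
    have e1 : (KP.mulVec (y τ - yref)) 0
        = KP 0 0 * (y τ 0 - yref 0) + KP 0 1 * (y τ 1 - yref 1) := by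
      simp [Matrix.mulVec, dotProduct, Fin.sum_univ_two]
    have e2 : (KI.mulVec (xc τ)) 0 = KI 0 0 * xc τ 0 + KI 0 1 * xc τ 1 := by
      simp [Matrix.mulVec, dotProduct, Fin.sum_univ_two]
    rw [e1, e2] at h
    linear_combination h + r * hw0
  have hsc1 : ∀ τ : ℝ, L * y' τ 1
      = -(KP 0 1 * (y τ 0 - yref 0)) - (r + KP 1 1) * (y τ 1 - yref 1)
        - KI 0 1 * (xc τ 0 + r * w 0) - KI 1 1 * (xc τ 1 + r * w 1) := by
    intro τ
    have h := hcomp τ 1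
    have e1 : (KP.mulVec (y τ - yref)) 1
        = KP 0 1 * (y τ 0 - yref 0) + KP 1 1 * (y τ 1 - yref 1) := by
      simp [Matrix.mulVec, dotProduct, Fin.sum_univ_two, hKP10]
    have e2 : (KI.mulVec (xc τ)) 1 = KI 0 1 * xc τ 0 + KI 1 1 * xc τ 1 := by
      simp [Matrix.mulVec, dotProduct, Fin.sum_univ_two, hKI10]
    rw [e1, e2] at h
    linear_combination h + r * hw1
  -- Lyapunov function
  set V : ℝ → ℝ := fun τ =>
    L*((y τ 0 - yref 0)*(y τ 0 - yref 0) + (y τ 1 - yref 1)*(y τ 1 - yref 1))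
    + (KI 0 0*((xc τ 0 + r*w 0)*(xc τ 0 + r*w 0))
        + 2*KI 0 1*((xc τ 0 + r*w 0)*(xc τ 1 + r*w 1))
        + KI 1 1*((xc τ 1 + r*w 1)*(xc τ 1 + r*w 1)))
    + 2*L*ε*((y τ 0 - yref 0)*(xc τ 0 + r*w 0) + (y τ 1 - yref 1)*(xc τ 1 + r*w 1))
    with hVdef
  set Vd : ℝ → ℝ := fun τ =>
    -(2*((r+KP 0 0)*(y τ 0 - yref 0)^2 + 2*KP 0 1*(y τ 0 - yref 0)*(y τ 1 - yref 1)
        + (r+KP 1 1)*(y τ 1 - yref 1)^2))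
    + 2*L*ε*((y τ 0 - yref 0)^2+(y τ 1 - yref 1)^2)
    - 2*ε*((r+KP 0 0)*(y τ 0 - yref 0)*(xc τ 0 + r*w 0)
        + KP 0 1*(y τ 0 - yref 0)*(xc τ 1 + r*w 1)
        + KP 0 1*(y τ 1 - yref 1)*(xc τ 0 + r*w 0)
        + (r+KP 1 1)*(y τ 1 - yref 1)*(xc τ 1 + r*w 1))
    - 2*ε*(KI 0 0*(xc τ 0 + r*w 0)^2 + 2*KI 0 1*(xc τ 0 + r*w 0)*(xc τ 1 + r*w 1)
        + KI 1 1*(xc τ 1 + r*w 1)^2)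
    with hVddef
  have hVder : ∀ τ : ℝ, HasDerivAt V (Vd τ) τ := by
    intro τ
    have he0 : HasDerivAt (fun τ => y τ 0 - yref 0) (y' τ 0) τ :=
      (hasDerivAt_pi.mp (hy τ) 0).sub_const _
    have he1 : HasDerivAt (fun τ => y τ 1 - yref 1) (y' τ 1) τ :=
      (hasDerivAt_pi.mp (hy τ) 1).sub_const _
    have hz0 : HasDerivAt (fun τ => xc τ 0 + r*w 0) (y τ 0 - yref 0) τ := by
      have h := (hasDerivAt_pi.mp (hxc τ) 0).add_const (r*w 0)
      simpa using h
    have hz1 : HasDerivAt (fun τ => xc τ 1 + r*w 1) (y τ 1 - yref 1) τ := by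
      have h := (hasDerivAt_pi.mp (hxc τ) 1).add_const (r*w 1)
      simpa using h
    have T1 := ((he0.mul he0).add (he1.mul he1)).const_mul L
    have T2a := (hz0.mul hz0).const_mul (KI 0 0)
    have T2b := (hz0.mul hz1).const_mul (2*KI 0 1)
    have T2c := (hz1.mul hz1).const_mul (KI 1 1)
    have T3 := ((he0.mul hz0).add (he1.mul hz1)).const_mul (2*L*ε)
    have Tot := (T1.add ((T2a.add T2b).add T2c)).add T3
    have : HasDerivAt V
        (L*((y' τ 0 * (y τ 0 - yref 0) + (y τ 0 - yref 0) * y' τ 0)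
            + (y' τ 1 * (y τ 1 - yref 1) + (y τ 1 - yref 1) * y' τ 1))
          + (KI 0 0 * ((y τ 0 - yref 0) * (xc τ 0 + r*w 0) + (xc τ 0 + r*w 0) * (y τ 0 - yref 0))
            + 2*KI 0 1 * ((y τ 0 - yref 0) * (xc τ 1 + r*w 1) + (xc τ 0 + r*w 0) * (y τ 1 - yref 1))
            + KI 1 1 * ((y τ 1 - yref 1) * (xc τ 1 + r*w 1) + (xc τ 1 + r*w 1) * (y τ 1 - yref 1)))
          + 2*L*ε*((y' τ 0 * (xc τ 0 + r*w 0) + (y τ 0 - yref 0) * (y τ 0 - yref 0))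
            + (y' τ 1 * (xc τ 1 + r*w 1) + (y τ 1 - yref 1) * (y τ 1 - yref 1)))) τ := Tot
    convert this using 1
    simp only [hVddef]
    linear_combination (-(2*(y τ 0 - yref 0)) - 2*ε*(xc τ 0 + r*w 0)) * hsc0 τ
      + (-(2*(y τ 1 - yref 1)) - 2*ε*(xc τ 1 + r*w 1)) * hsc1 τ
  -- decay of V * exp(2γτ)
  have hg : ∀ τ : ℝ, HasDerivAt (fun τ => V τ * Real.exp (2*γ*τ))
      ((Vd τ + 2*γ*V τ) * Real.exp (2*γ*τ)) τ := by
    intro τ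
    have hexp : HasDerivAt (fun τ : ℝ => Real.exp (2*γ*τ)) (2*γ*Real.exp (2*γ*τ)) τ := by
      have h := ((hasDerivAt_id τ).const_mul (2*γ)).exp
      simpa [mul_comm] using h
    have h := (hVder τ).fun_mul hexp
    exact h.congr_deriv (by ring)
  have hsum : ∀ τ : ℝ, Vd τ + 2*γ*V τ ≤ 0 := by
    intro τ
    have h := (hkey (y τ 0 - yref 0) (y τ 1 - yref 1) (xc τ 0 + r*w 0) (xc τ 1 + r*w 1)).1
    simp only [hVdef, hVddef]
    nlinarith only [h]
  have hant : Antitone (fun τ => V τ * Real.exp (2*γ*τ)) := by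
    apply antitone_of_deriv_nonpos (fun τ => (hg τ).differentiableAt)
    intro τ
    rw [(hg τ).deriv]
    exact mul_nonpos_iff.mpr (Or.inr ⟨hsum τ, (Real.exp_pos _).le⟩)
  have hg0 : V t * Real.exp (2*γ*t) ≤ V 0 := by
    have h := hant ht
    simpa using h
  have hVt : V t ≤ V 0 * Real.exp (-(2*γ*t)) := by
    have h := mul_le_mul_of_nonneg_right hg0 (Real.exp_pos (-(2*γ*t))).le
    rw [mul_assoc, ← Real.exp_add] at h
    have e : 2*γ*t + -(2*γ*t) = 0 := by ring
    rw [e, Real.exp_zero, mul_one] at h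
    exact h
  -- final bounds
  have hlow := (hkey (y t 0 - yref 0) (y t 1 - yref 1) (xc t 0 + r*w 0) (xc t 1 + r*w 1)).2.1
  have hup := (hkey (y 0 0 - yref 0) (y 0 1 - yref 1) (xc 0 0 + r*w 0) (xc 0 1 + r*w 1)).2.2
  set A : ℝ := enorm2 (y 0 - yref) with hAdef
  set B : ℝ := enorm2 (xc 0 + r • w) with hBdef
  have hAnn : 0 ≤ A := Real.sqrt_nonneg _
  have hBnn : 0 ≤ B := Real.sqrt_nonneg _
  have hA2 : A^2 = (y 0 0 - yref 0)^2 + (y 0 1 - yref 1)^2 := by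
    rw [hAdef, enorm2, Real.sq_sqrt (by positivity)]
    simp
  have hB2 : B^2 = (xc 0 0 + r*w 0)^2 + (xc 0 1 + r*w 1)^2 := by
    rw [hBdef, enorm2, Real.sq_sqrt (by positivity)]
    simp
  have hexp2 : Real.exp (-(γ*t))^2 = Real.exp (-(2*γ*t)) := by
    rw [sq, ← Real.exp_add]
    ring_nf
  have hexpnn : (0:ℝ) ≤ Real.exp (-(2*γ*t)) := (Real.exp_pos _).le
  -- V 0 ≤ M0 * (A+B)^2
  have hV0 : V 0 ≤ M0 * (A+B)^2 := by
    have hAB : (y 0 0 - yref 0)^2 + (y 0 1 - yref 1)^2 + (xc 0 0 + r*w 0)^2 + (xc 0 1 + r*w 1)^2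
        ≤ (A+B)^2 := by
      have h := mul_nonneg hAnn hBnn
      nlinarith only [h, hA2, hB2]
    have h2 := mul_le_mul_of_nonneg_left hAB hM0.le
    simp only [hVdef]
    nlinarith only [hup, h2]
  have hchain : m0 * ((y t 0 - yref 0)^2 + (y t 1 - yref 1)^2)
      ≤ M0 * (A+B)^2 * Real.exp (-(2*γ*t)) := by
    have h1 : m0 * ((y t 0 - yref 0)^2 + (y t 1 - yref 1)^2) ≤ V t := by
      have hzt : (0:ℝ) ≤ (xc t 0 + r*w 0)^2 + (xc t 1 + r*w 1)^2 := by positivity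
      have := mul_le_mul_of_nonneg_left hzt hm0.le
      simp only [hVdef]
      nlinarith only [hlow, this]
    have h2 := mul_le_mul_of_nonneg_right hV0 hexpnn
    linarith only [h1, hVt, h2]
  -- conclude
  have hRHSnn : 0 ≤ Real.sqrt (M0/m0) * Real.exp (-(γ*t)) * (A+B) := by positivity
  have hfin : (y t 0 - yref 0)^2 + (y t 1 - yref 1)^2
      ≤ (Real.sqrt (M0/m0) * Real.exp (-(γ*t)) * (A+B))^2 := by
    have hx : (Real.sqrt (M0/m0) * Real.exp (-(γ*t)) * (A+B))^2
        = (M0/m0) * (Real.exp (-(2*γ*t)) * (A+B)^2) := by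
      rw [mul_pow, mul_pow, Real.sq_sqrt (div_pos hM0 hm0).le, hexp2]
      ring
    rw [hx, div_mul_eq_mul_div, le_div_iff₀ hm0]
    nlinarith only [hchain]
  have hnorm : enorm2 (y t - yref) = Real.sqrt ((y t 0 - yref 0)^2 + (y t 1 - yref 1)^2) := by
    rw [enorm2]; simp
  rw [hnorm]
  calc Real.sqrt ((y t 0 - yref 0)^2 + (y t 1 - yref 1)^2)
      ≤ Real.sqrt ((Real.sqrt (M0/m0) * Real.exp (-(γ*t)) * (A+B))^2) :=
        Real.sqrt_le_sqrt hfin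
    _ = Real.sqrt (M0/m0) * Real.exp (-(γ*t)) * (A+B) := Real.sqrt_sq hRHSnn
    _ = Real.sqrt (M0/m0) * Real.exp (-(γ*t)) * (enorm2 (y 0 - yref) + enorm2 (xc 0 + r • w)) := by
        rw [hAdef, hBdef]
end

section
/- Let m, n ≥ 1 and let Ω : ℝ → M_{m×n}(ℝ) be continuous and bounded (there is B > 0 with ‖Ω(t)‖ ≤ B for all t ≥ 0), and persistently exciting: there exist T > 0 and C_c > 0 such that ∫_t^{t+T} Ω(s)ᵀΩ(s) ds ⪰ C_c·I_n (i.e. the matrix ∫_t^{t+T} ΩᵀΩ ds − C_c·I_n is positive semidefinite) for all t ≥ 0. Then there exist constants c > 0 and γ > 0, depending only on B, T, C_c, such that every differentiable θ̃ : ℝ → ℝⁿ satisfying θ̃'(t) = −Ω(t)ᵀ·Ω(t)·θ̃(t) for all t ≥ 0 obeys ‖θ̃(t)‖ ≤ c·e^{−γt}·‖θ̃(0)‖ for all t ≥ 0. -/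
open Matrix
open intervalIntegral

/-- Euclidean norm of a vector in `ℝⁿ` (represented as `Fin n → ℝ`). -/
noncomputable def enorm' {n : ℕ} (v : Fin n → ℝ) : ℝ := Real.sqrt (∑ i, v i ^ 2)

/-- Frobenius norm of a real `m × n` matrix. -/
noncomputable def frobNorm {m n : ℕ} (M : Matrix (Fin m) (Fin n) ℝ) : ℝ :=
  Real.sqrt (∑ i, ∑ j, M i j ^ 2)

/-- Cauchy–Schwarz for interval integrals of continuous functions. -/
lemma my_integral_sq_cs {a b : ℝ} (hab : a ≤ b) {f : ℝ → ℝ}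
    (hf : ContinuousOn f (Set.Icc a b)) :
    (∫ s in a..b, f s) ^ 2 ≤ (b - a) * ∫ s in a..b, (f s) ^ 2 := by
  rcases eq_or_lt_of_le hab with rfl | hlt
  · simp
  have huIcc : Set.uIcc a b = Set.Icc a b := Set.uIcc_of_le hab
  have h1 : IntervalIntegrable f MeasureTheory.volume a b :=
    (hf.mono (by rw [huIcc])).intervalIntegrable
  have h2 : IntervalIntegrable (fun s => (f s) ^ 2) MeasureTheory.volume a b :=
    ((hf.pow 2).mono (by rw [huIcc])).intervalIntegrable
  set I := ∫ s in a..b, f s with hI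
  set J := ∫ s in a..b, (f s) ^ 2 with hJ
  have h0 : 0 ≤ ∫ s in a..b, ((b - a) * f s - I) ^ 2 :=
    integral_nonneg hab fun _ _ => sq_nonneg _
  have hexp : (∫ s in a..b, ((b - a) * f s - I) ^ 2)
      = (b - a) ^ 2 * J - (2 * (b - a) * I) * I + I ^ 2 * (b - a) := by
    have hptw : ∀ s, ((b - a) * f s - I) ^ 2
        = (b - a) ^ 2 * (f s) ^ 2 - (2 * (b - a) * I) * f s + I ^ 2 := fun s => by ring
    simp_rw [hptw]
    rw [integral_add (((h2.const_mul _).sub (h1.const_mul _))) intervalIntegrable_const,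
      integral_sub (h2.const_mul _) (h1.const_mul _),
      integral_const_mul, integral_const_mul, integral_const]
    simp [smul_eq_mul]
    ring
  rw [hexp] at h0
  nlinarith [sq_nonneg I, sq_nonneg (b - a)]

/-- Row-wise Cauchy–Schwarz: `‖A x‖² ≤ ‖A‖_F² ‖x‖²`. -/
lemma my_mulVec_sq_le {a b : ℕ} (A : Matrix (Fin a) (Fin b) ℝ) (x : Fin b → ℝ) :
    ∑ i, ((A *ᵥ x) i) ^ 2 ≤ (∑ i, ∑ j, (A i j) ^ 2) * ∑ j, (x j) ^ 2 := by
  rw [Finset.sum_mul]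
  refine Finset.sum_le_sum fun i _ => ?_
  simpa [Matrix.mulVec, dotProduct] using
    Finset.sum_mul_sq_le_sq_mul_sq Finset.univ (fun j => A i j) x

/-- Quadratic form identity `xᵀAᵀAx = ‖Ax‖²`. -/
lemma my_quad_eq {a b : ℕ} (A : Matrix (Fin a) (Fin b) ℝ) (x : Fin b → ℝ) :
    x ⬝ᵥ ((Aᵀ * A) *ᵥ x) = ∑ p, ((A *ᵥ x) p) ^ 2 := by
  rw [← Matrix.mulVec_mulVec, Matrix.dotProduct_mulVec, Matrix.vecMul_transpose]
  simp [dotProduct, sq]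

set_option maxHeartbeats 1000000 in
/-- if the bounded continuous regressor `Ω` is persistently exciting,
then the gradient-estimator error dynamics `θ̃' = -ΩᵀΩ·θ̃` is globally exponentially
stable, with constants depending only on the bound `B`, the window `T` and the
excitation level `C_c`. -/
theorem pe_gradient_estimator_exponential_convergence
    (m n : ℕ) (hm : 1 ≤ m) (hn : 1 ≤ n)
    (B T Cc : ℝ) (hB : 0 < B) (hT : 0 < T) (hCc : 0 < Cc) :
    ∃ c > (0 : ℝ), ∃ γ > (0 : ℝ),
      ∀ (Ω : ℝ → Matrix (Fin m) (Fin n) ℝ),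
        (∀ i j, Continuous fun t => Ω t i j) →
        (∀ t ≥ (0 : ℝ), frobNorm (Ω t) ≤ B) →
        (∀ t ≥ (0 : ℝ),
          ((Matrix.of fun i j => ∫ s in t..(t + T), ((Ω s)ᵀ * Ω s) i j)
            - Cc • (1 : Matrix (Fin n) (Fin n) ℝ)).PosSemidef) →
        ∀ (θ : ℝ → Fin n → ℝ),
          (∀ t ≥ (0 : ℝ), HasDerivAt θ (-(((Ω t)ᵀ * Ω t).mulVec (θ t))) t) →
          ∀ t ≥ (0 : ℝ), enorm' (θ t) ≤ c * Real.exp (-(γ * t)) * enorm' (θ 0) := by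
  set μ : ℝ := Cc / (2 * (1 + B ^ 4 * T ^ 2)) with hμdef
  have hμ : 0 < μ := by positivity
  set ρ : ℝ := max (1 - 2 * μ) (1 / 2) with hρdef
  have hρ0 : (0 : ℝ) < ρ := lt_max_of_lt_right one_half_pos
  have hρ1 : ρ < 1 := max_lt (by linarith) (by norm_num)
  have hρ2 : 1 / ρ ≤ 2 := by
    rw [div_le_iff₀ hρ0]
    have := le_max_right (1 - 2 * μ) (1 / 2)
    linarith [hρdef ▸ this]
  set L : ℝ := Real.log (1 / ρ) with hLdef
  have hL : 0 < L := Real.log_pos (by rw [lt_div_iff₀ hρ0]; linarith)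
  set γ : ℝ := L / (2 * T) with hγdef
  refine ⟨Real.sqrt 2, by positivity, γ, by positivity, ?_⟩
  intro Ω hΩc hΩb hPE θ hθ
  -- continuity facts
  have hθcont : ∀ i, ContinuousOn (fun s => θ s i) (Set.Ici 0) := by
    intro i t ht
    exact (((hasDerivAt_pi.mp (hθ t ht)) i).continuousAt).continuousWithinAt
  have hQcont : ∀ i j, Continuous fun s => ((Ω s)ᵀ * Ω s) i j := by
    intro i j
    simp only [Matrix.mul_apply, Matrix.transpose_apply]
    exact continuous_finset_sum _ fun p _ => (hΩc p i).mul (hΩc p j)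
  set V : ℝ → ℝ := fun t => ∑ i, θ t i ^ 2 with hVdef
  set g : ℝ → ℝ := fun s => ∑ p, ((Ω s *ᵥ θ s) p) ^ 2 with hgdef
  have hVnonneg : ∀ t, 0 ≤ V t := fun t => Finset.sum_nonneg fun _ _ => sq_nonneg _
  have hgnonneg : ∀ s, 0 ≤ g s := fun s => Finset.sum_nonneg fun _ _ => sq_nonneg _
  have hgcont : ContinuousOn g (Set.Ici 0) := by
    apply continuousOn_finset_sum
    intro p _
    apply ContinuousOn.pow
    have hrw : (fun s => (Ω s *ᵥ θ s) p) = fun s => ∑ j, Ω s p j * θ s j := by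
      funext s; simp [Matrix.mulVec, dotProduct]
    rw [hrw]
    exact continuousOn_finset_sum _ fun j _ => ((hΩc p j).continuousOn).mul (hθcont j)
  -- derivative of V
  have hVd : ∀ t : ℝ, 0 ≤ t → HasDerivAt V (-2 * g t) t := by
    intro t ht
    have hcomp := hasDerivAt_pi.mp (hθ t ht)
    have h1 : HasDerivAt V (∑ i, (2 * θ t i ^ 1 * (-(((Ω t)ᵀ * Ω t) *ᵥ θ t)) i)) t := by
      apply HasDerivAt.fun_sum
      intro i _
      simpa using ((hcomp i).fun_pow 2)
    convert h1 using 1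
    have h2 : ∑ i, 2 * θ t i ^ 1 * (-(((Ω t)ᵀ * Ω t) *ᵥ θ t)) i
        = -2 * (θ t ⬝ᵥ (((Ω t)ᵀ * Ω t) *ᵥ θ t)) := by
      simp only [dotProduct, Pi.neg_apply, pow_one, Finset.mul_sum, neg_mul]
      exact Finset.sum_congr rfl fun i _ => by ring
    rw [h2, my_quad_eq]
  -- FTC for V
  have hFTC : ∀ a b : ℝ, 0 ≤ a → a ≤ b → V b - V a = ∫ s in a..b, (-2) * g s := by
    intro a b ha hab
    have hsub : Set.uIcc a b ⊆ Set.Ici 0 := by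
      rw [Set.uIcc_of_le hab]; exact fun x hx => le_trans ha hx.1
    exact (integral_eq_sub_of_hasDerivAt (fun s hs => hVd s (hsub hs))
      ((continuousOn_const.mul (hgcont.mono hsub)).intervalIntegrable)).symm
  have hVmono : ∀ a b : ℝ, 0 ≤ a → a ≤ b → V b ≤ V a := by
    intro a b ha hab
    have h1 := hFTC a b ha hab
    have h2 : (0:ℝ) ≤ ∫ s in a..b, 2 * g s :=
      integral_nonneg hab fun u _ => by
        have := hgnonneg u; positivity
    have h3 : ∫ s in a..b, (-2 : ℝ) * g s = - ∫ s in a..b, 2 * g s := by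
      rw [← integral_neg]; congr 1; funext s; ring
    rw [h3] at h1
    linarith
  -- the key persistency-of-excitation estimate
  have hkey : ∀ t : ℝ, 0 ≤ t → μ * V t ≤ ∫ s in t..(t + T), g s := by
    intro t ht
    have htT : t ≤ t + T := by linarith
    have hIccsub : Set.Icc t (t + T) ⊆ Set.Ici (0 : ℝ) := fun x hx => le_trans ht hx.1
    have huIccsub : Set.uIcc t (t + T) ⊆ Set.Ici (0 : ℝ) := by
      rw [Set.uIcc_of_le htT]; exact hIccsub
    set x : Fin n → ℝ := θ t with hxdef
    set G : ℝ := ∫ s in t..(t + T), g s with hGdef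
    have hint_g : IntervalIntegrable g MeasureTheory.volume t (t + T) :=
      (hgcont.mono huIccsub).intervalIntegrable
    have hGnonneg : 0 ≤ G := integral_nonneg htT fun u _ => hgnonneg u
    have hB2 : ∀ s : ℝ, 0 ≤ s → ∑ i, ∑ j, (Ω s i j) ^ 2 ≤ B ^ 2 := by
      intro s hs
      have h1 := hΩb s hs
      simp only [frobNorm] at h1
      have h2 : (0:ℝ) ≤ ∑ i, ∑ j, (Ω s i j) ^ 2 :=
        Finset.sum_nonneg fun _ _ => Finset.sum_nonneg fun _ _ => sq_nonneg _
      nlinarith [Real.sq_sqrt h2, Real.sqrt_nonneg (∑ i, ∑ j, (Ω s i j) ^ 2)]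
    -- Step A : PE lower bound
    set hfun : ℝ → ℝ := fun s => ∑ p, ((Ω s *ᵥ x) p) ^ 2 with hhfdef
    have hhcont : Continuous hfun := by
      apply continuous_finset_sum
      intro p _
      apply Continuous.pow
      have hrw : (fun s => (Ω s *ᵥ x) p) = fun s => ∑ j, Ω s p j * x j := by
        funext s; simp [Matrix.mulVec, dotProduct]
      rw [hrw]
      exact continuous_finset_sum _ fun j _ => (hΩc p j).mul continuous_const
    have hexpand : ∀ (N : Matrix (Fin n) (Fin n) ℝ) (y : Fin n → ℝ),
        y ⬝ᵥ (N *ᵥ y) = ∑ i, ∑ j, N i j * (y i * y j) := by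
      intro N y
      simp only [dotProduct, Matrix.mulVec, Finset.mul_sum]
      exact Finset.sum_congr rfl fun i _ => Finset.sum_congr rfl fun j _ => by ring
    have hA : Cc * V t ≤ ∫ s in t..(t + T), hfun s := by
      have hpe := (hPE t ht).dotProduct_mulVec_nonneg x
      set M : Matrix (Fin n) (Fin n) ℝ :=
        Matrix.of fun i j => ∫ s in t..(t + T), ((Ω s)ᵀ * Ω s) i j with hMdef
      have h1 : Cc * V t ≤ x ⬝ᵥ (M *ᵥ x) := by
        have e1 : x ⬝ᵥ ((M - Cc • (1 : Matrix (Fin n) (Fin n) ℝ)) *ᵥ x)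
            = x ⬝ᵥ (M *ᵥ x) - Cc * (x ⬝ᵥ x) := by
          rw [Matrix.sub_mulVec, dotProduct_sub, Matrix.smul_mulVec,
            Matrix.one_mulVec, dotProduct_smul]
          simp [smul_eq_mul]
        have e2 : x ⬝ᵥ x = V t := by
          simp [dotProduct, hVdef, hxdef, sq]
        simp only [star_trivial] at hpe
        rw [e1, e2] at hpe
        linarith
      have hint : ∀ i j, IntervalIntegrable (fun s => ((Ω s)ᵀ * Ω s) i j * (x i * x j))
          MeasureTheory.volume t (t + T) :=
        fun i j => ((hQcont i j).mul continuous_const).intervalIntegrable _ _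
      have hint2 : ∀ i, IntervalIntegrable (fun s => ∑ j, ((Ω s)ᵀ * Ω s) i j * (x i * x j))
          MeasureTheory.volume t (t + T) :=
        fun i => (continuous_finset_sum _ fun j _ =>
          (hQcont i j).mul continuous_const).intervalIntegrable _ _
      have h2 : (∫ s in t..(t + T), hfun s) = x ⬝ᵥ (M *ᵥ x) := by
        have e3 : ∀ s : ℝ, hfun s = ∑ i, ∑ j, ((Ω s)ᵀ * Ω s) i j * (x i * x j) := by
          intro s
          show (∑ p, ((Ω s *ᵥ x) p) ^ 2) = _
          rw [← my_quad_eq, hexpand]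
        rw [hexpand]
        calc (∫ s in t..(t + T), hfun s)
            = ∫ s in t..(t + T), ∑ i, ∑ j, ((Ω s)ᵀ * Ω s) i j * (x i * x j) := by
              simp_rw [e3]
          _ = ∑ i, ∫ s in t..(t + T), ∑ j, ((Ω s)ᵀ * Ω s) i j * (x i * x j) :=
              integral_finset_sum (fun i _ => hint2 i)
          _ = ∑ i, ∑ j, ∫ s in t..(t + T), ((Ω s)ᵀ * Ω s) i j * (x i * x j) :=
              Finset.sum_congr rfl fun i _ => integral_finset_sum (fun j _ => hint i j)
          _ = ∑ i, ∑ j, M i j * (x i * x j) := by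
              refine Finset.sum_congr rfl fun i _ => Finset.sum_congr rfl fun j _ => ?_
              rw [integral_mul_const]
              simp [hMdef]
      rw [← h2] at h1
      exact h1
    -- Step B : pointwise splitting  hfun ≤ 2 g + 2 kfun
    set kfun : ℝ → ℝ := fun s => ∑ p, ((Ω s *ᵥ fun i => θ s i - x i) p) ^ 2 with hkfdef
    have hkcont : ContinuousOn kfun (Set.Ici 0) := by
      apply continuousOn_finset_sum
      intro p _
      apply ContinuousOn.pow
      have hrw : (fun s => (Ω s *ᵥ fun i => θ s i - x i) p)
          = fun s => ∑ j, Ω s p j * (θ s j - x j) := by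
        funext s; simp [Matrix.mulVec, dotProduct]
      rw [hrw]
      exact continuousOn_finset_sum _ fun j _ =>
        ((hΩc p j).continuousOn).mul ((hθcont j).sub continuousOn_const)
    have hint_k : IntervalIntegrable kfun MeasureTheory.volume t (t + T) :=
      (hkcont.mono huIccsub).intervalIntegrable
    have hsplit : ∀ s p, (Ω s *ᵥ θ s) p
        = (Ω s *ᵥ x) p + (Ω s *ᵥ fun i => θ s i - x i) p := by
      intro s p
      simp only [Matrix.mulVec, dotProduct, ← Finset.sum_add_distrib]
      exact Finset.sum_congr rfl fun j _ => by ring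
    have hptB : ∀ s, hfun s ≤ 2 * g s + 2 * kfun s := by
      intro s
      have h1 : hfun s ≤ ∑ p, (2 * ((Ω s *ᵥ θ s) p) ^ 2
          + 2 * ((Ω s *ᵥ fun i => θ s i - x i) p) ^ 2) := by
        refine Finset.sum_le_sum fun p _ => ?_
        rw [hsplit s p]
        nlinarith [sq_nonneg ((Ω s *ᵥ x) p + 2 * (Ω s *ᵥ fun i => θ s i - x i) p),
          sq_nonneg ((Ω s *ᵥ fun i => θ s i - x i) p)]
      calc hfun s ≤ _ := h1
        _ = 2 * g s + 2 * kfun s := by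
            rw [Finset.sum_add_distrib, ← Finset.mul_sum, ← Finset.mul_sum]
    have hBint : (∫ s in t..(t + T), hfun s) ≤ 2 * G + 2 * ∫ s in t..(t + T), kfun s := by
      have h1 : (∫ s in t..(t + T), hfun s) ≤ ∫ s in t..(t + T), (2 * g s + 2 * kfun s) :=
        integral_mono_on htT (hhcont.intervalIntegrable _ _)
          ((hint_g.const_mul 2).add (hint_k.const_mul 2)) (fun s _ => hptB s)
      rwa [integral_add (hint_g.const_mul 2) (hint_k.const_mul 2),
        integral_const_mul, integral_const_mul] at h1
    -- Step D : bound on ∫ kfun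
    set f : ℝ → Fin n → ℝ := fun u => -(((Ω u)ᵀ * Ω u) *ᵥ θ u) with hfdef
    have hfcont : ∀ i, ContinuousOn (fun u => f u i) (Set.Ici 0) := by
      intro i
      have hrw : (fun u => f u i) = fun u => -(∑ j, ((Ω u)ᵀ * Ω u) i j * θ u j) := by
        funext u; simp [hfdef, Matrix.mulVec, dotProduct]
      rw [hrw]
      exact (continuousOn_finset_sum _ fun j _ =>
        ((hQcont i j).continuousOn).mul (hθcont j)).neg
    have hfsqcont : ContinuousOn (fun u => ∑ i, (f u i) ^ 2) (Set.Ici 0) :=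
      continuousOn_finset_sum _ fun i _ => (hfcont i).pow 2
    have hθint : ∀ s ∈ Set.Icc t (t + T), ∀ i, θ s i - x i = ∫ u in t..s, f u i := by
      intro s hs i
      have hsubs : Set.uIcc t s ⊆ Set.Ici 0 := by
        rw [Set.uIcc_of_le hs.1]
        exact fun u hu => le_trans ht hu.1
      exact (integral_eq_sub_of_hasDerivAt
        (fun u hu => (hasDerivAt_pi.mp (hθ u (hsubs hu))) i)
        (((hfcont i).mono hsubs).intervalIntegrable)).symm
    have hfsq : ∀ u : ℝ, 0 ≤ u → ∑ i, (f u i) ^ 2 ≤ B ^ 2 * g u := by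
      intro u hu
      have h1 : ∀ i, (f u i) ^ 2 = (((Ω u)ᵀ *ᵥ (Ω u *ᵥ θ u)) i) ^ 2 := by
        intro i
        rw [hfdef]
        simp [Matrix.mulVec_mulVec]
      calc ∑ i, (f u i) ^ 2 = ∑ i, (((Ω u)ᵀ *ᵥ (Ω u *ᵥ θ u)) i) ^ 2 := by simp_rw [h1]
        _ ≤ (∑ i, ∑ j, ((Ω u)ᵀ i j) ^ 2) * ∑ p, ((Ω u *ᵥ θ u) p) ^ 2 :=
            my_mulVec_sq_le _ _
        _ ≤ B ^ 2 * g u := by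
            refine mul_le_mul_of_nonneg_right ?_ (hgnonneg u)
            simp only [Matrix.transpose_apply]
            rw [Finset.sum_comm]
            exact hB2 u hu
    have hsubg : ∀ s ∈ Set.Icc t (t + T), (∫ u in t..s, g u) ≤ G := by
      intro s hs
      have hg1 : IntervalIntegrable g MeasureTheory.volume t s :=
        (hgcont.mono (by rw [Set.uIcc_of_le hs.1]; exact fun u hu => le_trans ht hu.1)).intervalIntegrable
      have hg2 : IntervalIntegrable g MeasureTheory.volume s (t + T) :=
        (hgcont.mono (by rw [Set.uIcc_of_le hs.2]; exact fun u hu => le_trans ht (le_trans hs.1 hu.1))).intervalIntegrable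
      have hadd := integral_add_adjacent_intervals hg1 hg2
      have h3 : 0 ≤ ∫ u in s..(t + T), g u := integral_nonneg hs.2 fun u _ => hgnonneg u
      have h4 : 0 ≤ ∫ u in t..s, g u := integral_nonneg hs.1 fun u _ => hgnonneg u
      rw [hGdef]
      linarith [hadd]
    have hesq : ∀ s ∈ Set.Icc t (t + T), ∑ i, (θ s i - x i) ^ 2 ≤ T * (B ^ 2 * G) := by
      intro s hs
      have hsubs : Set.Icc t s ⊆ Set.Ici (0:ℝ) := fun u hu => le_trans ht hu.1
      have hsubs' : Set.uIcc t s ⊆ Set.Ici (0:ℝ) := by rw [Set.uIcc_of_le hs.1]; exact hsubs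
      have hcs : ∀ i, (θ s i - x i) ^ 2 ≤ (s - t) * ∫ u in t..s, (f u i) ^ 2 := by
        intro i
        rw [hθint s hs i]
        exact my_integral_sq_cs hs.1 ((hfcont i).mono hsubs)
      have hintfsq : ∀ i, IntervalIntegrable (fun u => (f u i) ^ 2)
          MeasureTheory.volume t s :=
        fun i => (((hfcont i).pow 2).mono hsubs').intervalIntegrable
      calc ∑ i, (θ s i - x i) ^ 2
          ≤ ∑ i, (s - t) * ∫ u in t..s, (f u i) ^ 2 :=
            Finset.sum_le_sum fun i _ => hcs i
        _ = (s - t) * ∑ i, ∫ u in t..s, (f u i) ^ 2 := by rw [Finset.mul_sum]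
        _ = (s - t) * ∫ u in t..s, ∑ i, (f u i) ^ 2 := by
            rw [integral_finset_sum (fun i _ => hintfsq i)]
        _ ≤ (s - t) * ∫ u in t..s, B ^ 2 * g u := by
            refine mul_le_mul_of_nonneg_left ?_ (by linarith [hs.1])
            refine integral_mono_on hs.1 ((hfsqcont.mono hsubs').intervalIntegrable)
              (((hgcont.mono hsubs').intervalIntegrable).const_mul _)
              (fun u hu => hfsq u (le_trans ht hu.1))
        _ = (s - t) * (B ^ 2 * ∫ u in t..s, g u) := by rw [integral_const_mul]
        _ ≤ T * (B ^ 2 * G) := by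
            have e1 : B ^ 2 * (∫ u in t..s, g u) ≤ B ^ 2 * G :=
              mul_le_mul_of_nonneg_left (hsubg s hs) (sq_nonneg B)
            have e2 : 0 ≤ B ^ 2 * ∫ u in t..s, g u :=
              mul_nonneg (sq_nonneg B) (integral_nonneg hs.1 fun u _ => hgnonneg u)
            have e3 : s - t ≤ T := by linarith [hs.2]
            have e4 : 0 ≤ s - t := by linarith [hs.1]
            nlinarith
    have hkbd : ∀ s ∈ Set.Icc t (t + T), kfun s ≤ B ^ 2 * (T * (B ^ 2 * G)) := by
      intro s hs
      have h2 : (0:ℝ) ≤ ∑ i, (θ s i - x i) ^ 2 :=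
        Finset.sum_nonneg fun _ _ => sq_nonneg _
      calc kfun s ≤ (∑ i, ∑ j, (Ω s i j) ^ 2) * ∑ i, (θ s i - x i) ^ 2 :=
            my_mulVec_sq_le _ _
        _ ≤ B ^ 2 * (T * (B ^ 2 * G)) :=
            mul_le_mul (hB2 s (le_trans ht hs.1)) (hesq s hs) h2 (sq_nonneg B)
    have hkint : (∫ s in t..(t + T), kfun s) ≤ T * (B ^ 2 * (T * (B ^ 2 * G))) := by
      have h1 : (∫ s in t..(t + T), kfun s)
          ≤ ∫ _ in t..(t + T), (B ^ 2 * (T * (B ^ 2 * G))) :=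
        integral_mono_on htT hint_k intervalIntegrable_const hkbd
      rwa [integral_const, smul_eq_mul, add_sub_cancel_left] at h1
    -- combine
    have hfin : Cc * V t ≤ 2 * (1 + B ^ 4 * T ^ 2) * G := by
      have := le_trans hA hBint
      nlinarith [hkint]
    have hμeq : μ * V t = Cc * V t / (2 * (1 + B ^ 4 * T ^ 2)) := by
      rw [hμdef]; ring
    rw [hμeq, div_le_iff₀ (by positivity)]
    nlinarith [hfin]
  -- per-window contraction
  have hstep : ∀ t : ℝ, 0 ≤ t → V (t + T) ≤ ρ * V t := by
    intro t ht
    have h1 := hFTC t (t + T) ht (by linarith)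
    have h2 : ∫ s in t..(t + T), (-2 : ℝ) * g s = (-2) * ∫ s in t..(t + T), g s :=
      integral_const_mul _ _
    have h3 := hkey t ht
    have h4 : 1 - 2 * μ ≤ ρ := le_max_left _ _
    nlinarith [mul_nonneg (sub_nonneg.mpr h4) (hVnonneg t)]
  -- iterate
  have hiter : ∀ k : ℕ, V (k * T) ≤ ρ ^ k * V 0 := by
    intro k
    induction k with
    | zero => simp
    | succ k ih =>
      have hk0 : (0:ℝ) ≤ (k:ℝ) * T := by positivity
      have heq : ((k+1 : ℕ) : ℝ) * T = (k:ℝ) * T + T := by push_cast; ring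
      calc V (((k+1 : ℕ) : ℝ) * T) = V ((k:ℝ) * T + T) := by rw [heq]
        _ ≤ ρ * V ((k:ℝ) * T) := hstep _ hk0
        _ ≤ ρ * (ρ ^ k * V 0) := mul_le_mul_of_nonneg_left ih (le_of_lt hρ0)
        _ = ρ ^ (k+1) * V 0 := by ring
  -- final: exponential bound
  intro t ht
  set k : ℕ := ⌊t / T⌋₊ with hkdef
  have hk1 : (k:ℝ) * T ≤ t := by
    have h1 : (k:ℝ) ≤ t / T := Nat.floor_le (by positivity)
    calc (k:ℝ) * T ≤ (t / T) * T := mul_le_mul_of_nonneg_right h1 (le_of_lt hT)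
      _ = t := by field_simp
  have hk2 : t / T < (k:ℝ) + 1 := Nat.lt_floor_add_one _
  have hVt : V t ≤ ρ ^ k * V 0 :=
    le_trans (hVmono ((k:ℝ) * T) t (by positivity) hk1) (hiter k)
  have hρexp : ρ = Real.exp (-L) := by
    rw [hLdef, one_div, Real.log_inv, neg_neg, Real.exp_log hρ0]
  have hpow : ρ ^ k = Real.exp (-((k:ℝ) * L)) := by
    rw [hρexp, ← Real.exp_nat_mul]
    ring_nf
  have h2γ : 2 * γ * t = (t / T) * L := by
    rw [hγdef]; field_simp
  have hexp2 : Real.exp (-((k:ℝ) * L)) ≤ (1 / ρ) * Real.exp (-(2 * γ * t)) := by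
    have e1 : (1 / ρ) = Real.exp L := by
      rw [hLdef, Real.exp_log (by positivity)]
    rw [e1, ← Real.exp_add]
    apply Real.exp_le_exp.mpr
    rw [h2γ]
    nlinarith [hk2, hL.le, hT]
  have hE : (Real.exp (-(γ * t))) ^ 2 = Real.exp (-(2 * γ * t)) := by
    rw [← Real.exp_nat_mul]
    congr 1
    push_cast
    ring
  have hVfin : V t ≤ 2 * (Real.exp (-(γ * t))) ^ 2 * V 0 := by
    calc V t ≤ ρ ^ k * V 0 := hVt
      _ = Real.exp (-((k:ℝ) * L)) * V 0 := by rw [hpow]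
      _ ≤ ((1 / ρ) * Real.exp (-(2 * γ * t))) * V 0 :=
          mul_le_mul_of_nonneg_right hexp2 (hVnonneg 0)
      _ ≤ (2 * Real.exp (-(2 * γ * t))) * V 0 := by
          refine mul_le_mul_of_nonneg_right ?_ (hVnonneg 0)
          exact mul_le_mul_of_nonneg_right hρ2 (Real.exp_nonneg _)
      _ = 2 * (Real.exp (-(γ * t))) ^ 2 * V 0 := by rw [hE]
  show Real.sqrt (∑ i, θ t i ^ 2) ≤ Real.sqrt 2 * Real.exp (-(γ * t)) * Real.sqrt (∑ i, θ 0 i ^ 2)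
  have hcast : Real.sqrt (V t) ≤ Real.sqrt (2 * (Real.exp (-(γ * t))) ^ 2 * V 0) :=
    Real.sqrt_le_sqrt hVfin
  calc Real.sqrt (∑ i, θ t i ^ 2) = Real.sqrt (V t) := rfl
    _ ≤ Real.sqrt (2 * (Real.exp (-(γ * t))) ^ 2 * V 0) := hcast
    _ = Real.sqrt 2 * Real.exp (-(γ * t)) * Real.sqrt (V 0) := by
        rw [Real.sqrt_mul (by positivity), Real.sqrt_mul (by norm_num),
          Real.sqrt_sq (Real.exp_nonneg _), mul_assoc]
    _ = Real.sqrt 2 * Real.exp (-(γ * t)) * Real.sqrt (∑ i, θ 0 i ^ 2) := rfl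
end
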